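/- arXiv:2009.10294 — 6 statements merged into one kernel-verified Lean document; each statement's English description precedes it below -/
import Mathlib

section
/- For the sequence a_i = n - i + 1 (1 ≤ i ≤ n) and Δ_s(k) = k(k-1) + Σ_{i=k+1}^{n} min{k, a_i} − Σ_{i=1}^{k} a_i, the maximum over 1 ≤ k ≤ n of −Δ_s(k) equals ⌈n/2⌉. -/
open Finset

lemma sumA (n k : ℕ) :
    2 * ∑ i ∈ Finset.Icc 1 k, ((n : ℤ) - (i : ℤ) + 1)
      = 2 * k * n - k * (k - 1) := by
  induction k with
  | zero => simp
  | succ k ih =>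
    rw [Finset.sum_Icc_succ_top (by omega)]
    push_cast
    push_cast at ih
    linarith

lemma sumTail (n m : ℕ) (h : m ≤ n) :
    2 * ∑ i ∈ Finset.Icc (m + 1) n, ((n : ℤ) - (i : ℤ) + 1)
      = ((n : ℤ) - m) * ((n : ℤ) - m + 1) := by
  have split : (∑ i ∈ Finset.Ioc 0 m, ((n : ℤ) - (i : ℤ) + 1))
      + (∑ i ∈ Finset.Ioc m n, ((n : ℤ) - (i : ℤ) + 1))
      = ∑ i ∈ Finset.Ioc 0 n, ((n : ℤ) - (i : ℤ) + 1) :=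
    Finset.sum_Ioc_consecutive _ (by omega) h
  have e1 : Finset.Ioc 0 m = Finset.Icc 1 m := by rw [← Finset.Icc_add_one_left_eq_Ioc, zero_add]
  have e2 : Finset.Ioc 0 n = Finset.Icc 1 n := by rw [← Finset.Icc_add_one_left_eq_Ioc, zero_add]
  have e3 : Finset.Ioc m n = Finset.Icc (m+1) n := by rw [← Finset.Icc_add_one_left_eq_Ioc]
  rw [e1, e2, e3] at split
  have h1 := sumA n m
  have h2 := sumA n n
  push_cast at *
  nlinarith [split]

lemma sumMin_le (n k : ℕ) (h1 : 1 ≤ k) (h : 2 * k ≤ n) :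
    2 * ∑ i ∈ Finset.Icc (k + 1) n, min (k : ℤ) ((n : ℤ) - (i : ℤ) + 1)
      = 2 * (k : ℤ) * ((n : ℤ) - 2 * k) + (k : ℤ) * ((k : ℤ) + 1) := by
  have e3 : ∀ m : ℕ, Finset.Ioc m n = Finset.Icc (m+1) n := fun m => by
    rw [← Finset.Icc_add_one_left_eq_Ioc]
  have split : (∑ i ∈ Finset.Ioc k (n - k), min (k : ℤ) ((n : ℤ) - (i : ℤ) + 1))
      + (∑ i ∈ Finset.Ioc (n - k) n, min (k : ℤ) ((n : ℤ) - (i : ℤ) + 1))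
      = ∑ i ∈ Finset.Ioc k n, min (k : ℤ) ((n : ℤ) - (i : ℤ) + 1) :=
    Finset.sum_Ioc_consecutive _ (by omega) (by omega)
  have c1 : ∑ i ∈ Finset.Ioc k (n - k), min (k : ℤ) ((n : ℤ) - (i : ℤ) + 1)
      = ∑ i ∈ Finset.Ioc k (n - k), (k : ℤ) := by
    apply Finset.sum_congr rfl
    intro i hi
    simp only [Finset.mem_Ioc] at hi
    have : (k : ℤ) ≤ (n : ℤ) - (i : ℤ) + 1 := by
      have : i ≤ n - k := hi.2
      have : (i : ℤ) ≤ (n : ℤ) - k := by exact_mod_cast (by omega : (i:ℤ) ≤ (n:ℤ) - (k:ℤ))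
      linarith
    exact min_eq_left this
  have c2 : ∑ i ∈ Finset.Ioc (n - k) n, min (k : ℤ) ((n : ℤ) - (i : ℤ) + 1)
      = ∑ i ∈ Finset.Icc (n - k + 1) n, ((n : ℤ) - (i : ℤ) + 1) := by
    rw [e3]
    apply Finset.sum_congr rfl
    intro i hi
    simp only [Finset.mem_Icc] at hi
    apply min_eq_right
    have h1 : n - k + 1 ≤ i := hi.1
    omega
  have tl := sumTail n (n - k) (by omega)
  have hsum : ∑ i ∈ Finset.Ioc k (n - k), (k : ℤ) = ((n - k - k : ℕ) : ℤ) * k := by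
    rw [Finset.sum_const, Nat.card_Ioc]
    ring
  rw [c1, c2, hsum] at split
  rw [e3] at split
  have hc : ((n - k - k : ℕ) : ℤ) = (n : ℤ) - 2 * k := by
    have : ((n - k - k : ℕ) : ℤ) = (n : ℤ) - (k : ℤ) - (k : ℤ) := by
      push_cast [Nat.cast_sub (by omega : k ≤ n - k), Nat.cast_sub (by omega : k ≤ n)]
      ring
    linarith [this]
  have hc2 : ((n - k : ℕ) : ℤ) = (n : ℤ) - k := by
    push_cast [Nat.cast_sub (by omega : k ≤ n)]; ring
  rw [hc] at split
  rw [hc2] at tl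
  nlinarith [split, tl]

lemma sumMin_gt (n k : ℕ) (h : n < 2 * k) (hk : k ≤ n) :
    2 * ∑ i ∈ Finset.Icc (k + 1) n, min (k : ℤ) ((n : ℤ) - (i : ℤ) + 1)
      = ((n : ℤ) - k) * ((n : ℤ) - k + 1) := by
  have c : ∑ i ∈ Finset.Icc (k + 1) n, min (k : ℤ) ((n : ℤ) - (i : ℤ) + 1)
      = ∑ i ∈ Finset.Icc (k + 1) n, ((n : ℤ) - (i : ℤ) + 1) := by
    apply Finset.sum_congr rfl
    intro i hi
    simp only [Finset.mem_Icc] at hi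
    apply min_eq_right
    have : (k : ℤ) + 1 ≤ (i : ℤ) := by exact_mod_cast hi.1
    have hn2k : (n : ℤ) < 2 * k := by exact_mod_cast h
    linarith
  rw [c, sumTail n k hk]

lemma val_le (n k : ℕ) (h1 : 1 ≤ k) (h : 2 * k ≤ n) :
    -((k : ℤ) * ((k : ℤ) - 1)
      + ∑ i ∈ Finset.Icc (k + 1) n, min (k : ℤ) ((n : ℤ) - (i : ℤ) + 1)
      - ∑ i ∈ Finset.Icc 1 k, ((n : ℤ) - (i : ℤ) + 1)) = (k : ℤ) := by
  have hA := sumA n k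
  have hM := sumMin_le n k h1 h
  linarith

lemma val_gt (n k : ℕ) (h : n < 2 * k) (hk : k ≤ n) :
    2 * (-((k : ℤ) * ((k : ℤ) - 1)
      + ∑ i ∈ Finset.Icc (k + 1) n, min (k : ℤ) ((n : ℤ) - (i : ℤ) + 1)
      - ∑ i ∈ Finset.Icc 1 k, ((n : ℤ) - (i : ℤ) + 1)))
      = (n : ℤ) + 1 - (2 * (k : ℤ) - (n : ℤ) - 1) ^ 2 := by
  have hA := sumA n k
  have hM := sumMin_gt n k h hk
  nlinarith [hA, hM]

/-- For the sequence `n, n-1, …, 1`, the maximum over `1 ≤ k ≤ n` of the negated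
Erdős–Gallai deficiency `−Δ_s(k)` equals `⌈n/2⌉`. -/
theorem max_neg_deficiency_descending (n : ℕ) (hn : 1 ≤ n) :
    IsGreatest {x : ℤ | ∃ k ∈ Finset.Icc 1 n,
        x = -((k : ℤ) * ((k : ℤ) - 1)
          + ∑ i ∈ Finset.Icc (k + 1) n, min (k : ℤ) ((n : ℤ) - (i : ℤ) + 1)
          - ∑ i ∈ Finset.Icc 1 k, ((n : ℤ) - (i : ℤ) + 1))}
      (((n + 1) / 2 : ℕ) : ℤ) := by
  constructor
  · refine ⟨(n + 1) / 2, Finset.mem_Icc.mpr (by omega), ?_⟩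
    rcases Nat.even_or_odd n with ⟨t, ht⟩ | ⟨t, ht⟩
    · have h2 : 2 * ((n + 1) / 2) ≤ n := by omega
      rw [val_le n _ (by omega) h2]
    · have h2 : n < 2 * ((n + 1) / 2) := by omega
      have hv := val_gt n ((n + 1) / 2) h2 (by omega)
      have hc : (2 * (((n + 1) / 2 : ℕ) : ℤ) - (n : ℤ) - 1) = 0 := by omega
      rw [hc] at hv
      have h3 : 2 * (((n + 1) / 2 : ℕ) : ℤ) = (n : ℤ) + 1 := by omega
      have h0 : ((0 : ℤ)) ^ 2 = 0 := by norm_num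
      rw [h0] at hv
      linarith
  · rintro x ⟨k, hk, rfl⟩
    rw [Finset.mem_Icc] at hk
    rcases le_or_gt (2 * k) n with h | h
    · rw [val_le n k hk.1 h]
      have : k ≤ (n + 1) / 2 := by omega
      exact_mod_cast this
    · have hv := val_gt n k h hk.2
      have hsq : (0 : ℤ) ≤ (2 * (k : ℤ) - (n : ℤ) - 1) ^ 2 := sq_nonneg _
      rcases Nat.even_or_odd n with ⟨t, ht⟩ | ⟨t, ht⟩
      · have h1 : (1 : ℤ) ≤ 2 * (k : ℤ) - (n : ℤ) - 1 := by omega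
        have hsq1 : (1 : ℤ) ≤ (2 * (k : ℤ) - (n : ℤ) - 1) ^ 2 := by nlinarith
        have hc : 2 * (((n + 1) / 2 : ℕ) : ℤ) = (n : ℤ) := by omega
        linarith
      · have hc : 2 * (((n + 1) / 2 : ℕ) : ℤ) = (n : ℤ) + 1 := by omega
        linarith
end

section
/- For every positive integer n, the least number of edges of a finite simple graph whose degree set equals {1, 2, ..., n} is (1/2)(n(n+1)/2 + ⌈n/2⌉). -/
/-- The degree set of a finite simple graph: the set of distinct vertex degrees. -/
def degreeSet {V : Type} [Fintype V] (G : SimpleGraph V) [DecidableRel G.Adj] : Finset ℕ :=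
  Finset.univ.image (fun v => G.degree v)

/-- `lq D` is the least number of edges of a finite simple graph whose degree set is `D`. -/
noncomputable def lq (D : Finset ℕ) : ℕ :=
  sInf {q | ∃ (p : ℕ) (G : SimpleGraph (Fin p)) (inst : DecidableRel G.Adj),
    @degreeSet _ _ G inst = D ∧
    (@SimpleGraph.edgeFinset _ G (@SimpleGraph.fintypeEdgeSet _ G _ inst)).card = q}

open Finset


def valF (n : ℕ) (v : Fin (n+1)) : ℕ := if v.val = 0 then (n+1)/2 else v.val

def G0 (n : ℕ) : SimpleGraph (Fin (n+1)) where
  Adj v w := v ≠ w ∧ n + 1 ≤ valF n v + valF n w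
  symm := by constructor; intro v w h; exact ⟨h.1.symm, by have := h.2; omega⟩
  loopless := by constructor; intro v h; exact h.1 rfl

instance G0adjDec (n : ℕ) : DecidableRel (G0 n).Adj :=
  fun v w => inferInstanceAs (Decidable (v ≠ w ∧ n + 1 ≤ valF n v + valF n w))

lemma G0_degree (n : ℕ) (hn : 0 < n) (v : Fin (n+1)) : (G0 n).degree v = valF n v := by
  rw [← SimpleGraph.card_neighborFinset_eq_degree]
  have himg : ((G0 n).neighborFinset v).image Fin.val
      = (Finset.range (n+1)).filter
          (fun j => j ≠ v.val ∧ n + 1 ≤ valF n v + (if j = 0 then (n+1)/2 else j)) := by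
    ext j
    simp only [Finset.mem_image, SimpleGraph.mem_neighborFinset, Finset.mem_filter,
      Finset.mem_range]
    constructor
    · rintro ⟨w, hw, rfl⟩
      obtain ⟨hne, hle⟩ := hw
      have : valF n w = if w.val = 0 then (n+1)/2 else w.val := rfl
      refine ⟨w.isLt, ?_, ?_⟩
      · intro h; exact hne (Fin.ext h.symm)
      · rw [← this]; exact hle
    · rintro ⟨hj, hne, hle⟩
      refine ⟨⟨j, hj⟩, ⟨?_, ?_⟩, rfl⟩
      · intro h; apply hne; exact congrArg Fin.val h.symm
      · exact hle
  have hcard : ((G0 n).neighborFinset v).card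
      = ((Finset.range (n+1)).filter
          (fun j => j ≠ v.val ∧ n + 1 ≤ valF n v + (if j = 0 then (n+1)/2 else j))).card := by
    rw [← himg, Finset.card_image_of_injective _ Fin.val_injective]
  rw [hcard]
  by_cases h0 : v.val = 0
  · have hv : valF n v = (n+1)/2 := by simp [valF, h0]
    rw [hv]
    have : (Finset.range (n+1)).filter
        (fun j => j ≠ v.val ∧ n + 1 ≤ (n+1)/2 + (if j = 0 then (n+1)/2 else j))
        = Finset.Icc (n+1-(n+1)/2) n := by
      ext j
      simp only [Finset.mem_filter, Finset.mem_range, Finset.mem_Icc, h0]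
      by_cases hj : j = 0 <;> simp [hj] <;> omega
    rw [this, Nat.card_Icc]
    omega
  · have hv : valF n v = v.val := by simp [valF, h0]
    have hvle : v.val ≤ n := by omega
    rw [hv]
    set i := v.val with hi
    by_cases hcase : 2 * i ≤ n
    · have : (Finset.range (n+1)).filter
          (fun j => j ≠ i ∧ n + 1 ≤ i + (if j = 0 then (n+1)/2 else j))
          = Finset.Icc (n+1-i) n := by
        ext j
        simp only [Finset.mem_filter, Finset.mem_range, Finset.mem_Icc]
        by_cases hj : j = 0 <;> simp [hj] <;> omega
      rw [this, Nat.card_Icc]; omega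
    · have : (Finset.range (n+1)).filter
          (fun j => j ≠ i ∧ n + 1 ≤ i + (if j = 0 then (n+1)/2 else j))
          = insert 0 ((Finset.Icc (n+1-i) n).erase i) := by
        ext j
        simp only [Finset.mem_filter, Finset.mem_range, Finset.mem_insert, Finset.mem_erase,
          Finset.mem_Icc]
        by_cases hj : j = 0 <;> simp [hj] <;> omega
      rw [this, Finset.card_insert_of_notMem, Finset.card_erase_of_mem]
      · rw [Nat.card_Icc]; omega
      · simp only [Finset.mem_Icc]; omega
      · simp only [Finset.mem_erase, Finset.mem_Icc]; omega

lemma G0_degreeSet (n : ℕ) (hn : 0 < n) :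
    Finset.univ.image (fun v => (G0 n).degree v) = Finset.Icc 1 n := by
  ext i
  simp only [Finset.mem_image, Finset.mem_univ, true_and, Finset.mem_Icc]
  constructor
  · rintro ⟨v, rfl⟩
    rw [G0_degree n hn v]
    unfold valF
    by_cases h : v.val = 0 <;> simp [h] <;> [omega; exact ⟨by omega, by omega⟩]
  · rintro ⟨h1, h2⟩
    exact ⟨⟨i, by omega⟩, by rw [G0_degree n hn]; simp [valF]; omega⟩

lemma G0_sum (n : ℕ) (hn : 0 < n) :
    ∑ v : Fin (n+1), (G0 n).degree v = n * (n+1) / 2 + (n+1)/2 := by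
  have : ∀ v, (G0 n).degree v = valF n v := G0_degree n hn
  simp only [this, valF]
  rw [Fin.sum_univ_eq_sum_range (fun j => if j = 0 then (n+1)/2 else j) (n+1)]
  · rw [Finset.sum_range_succ' (fun j => if j = 0 then (n+1)/2 else j) n]
    simp only [Nat.succ_ne_zero, if_false, if_true, Nat.add_eq_zero, one_ne_zero, and_false]
    have h1 : ∑ k ∈ Finset.range n, (k+1) = ∑ k ∈ Finset.range (n+1), k := by
      rw [Finset.sum_range_succ' (fun j => j) n]
      simp
    rw [h1, Finset.sum_range_id]
    simp only [Nat.add_sub_cancel]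
    have : (n+1) * n = n * (n+1) := by ring
    rw [this]

lemma sum_Ioc_id_mul_two (a b : ℕ) (h : a ≤ b) :
    (∑ i ∈ Finset.Ioc a b, i) * 2 = (a + b + 1) * (b - a) := by
  induction b, h using Nat.le_induction with
  | base => simp
  | succ b hab ih =>
    rw [Finset.sum_Ioc_succ_top hab (fun i => i)]
    obtain ⟨c, rfl⟩ : ∃ c, b = a + c := ⟨b - a, by omega⟩
    rw [Nat.add_sub_cancel_left] at ih
    have h2 : a + c + 1 - a = c + 1 := by omega
    rw [h2]
    linear_combination ih

lemma parity_lemma (n T : ℕ) (hT : 2 * T = (n+1) * n) : 2 ∣ (T + (n+1)/2) := by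
  rcases Nat.even_or_odd n with ⟨b, hb⟩ | ⟨b, hb⟩
  · have h1 : T = b * (2*b+1) := by
      have h : 2 * T = 2 * (b * (2*b+1)) := by rw [hT, hb]; ring
      exact Nat.eq_of_mul_eq_mul_left two_pos h
    refine ⟨b * (b+1), ?_⟩
    have h2 : (n+1)/2 = b := by omega
    rw [h1, h2]; ring
  · have h1 : T = (b+1) * (2*b+1) := by
      have h : 2 * T = 2 * ((b+1) * (2*b+1)) := by rw [hT, hb]; ring
      exact Nat.eq_of_mul_eq_mul_left two_pos h
    refine ⟨(b+1) * (b+1), ?_⟩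
    have h2 : (n+1)/2 = b + 1 := by omega
    rw [h1, h2]; ring

set_option maxHeartbeats 2000000 in
lemma lower_bound {n p : ℕ} (hn : 0 < n) (G : SimpleGraph (Fin p)) [inst : DecidableRel G.Adj]
    (hD : degreeSet G = Finset.Icc 1 n) :
    n * (n + 1) / 2 + (n + 1) / 2 ≤
      2 * (@SimpleGraph.edgeFinset _ G (@SimpleGraph.fintypeEdgeSet _ G _ inst)).card := by
  have hsum : ∑ v, G.degree v = 2 * G.edgeFinset.card := G.sum_degrees_eq_twice_card_edges
  obtain ⟨q, hq⟩ : ∃ q, G.edgeFinset.card = q := ⟨_, rfl⟩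
  rw [hq] at hsum
  obtain ⟨T, hTdef⟩ : ∃ T, T = ∑ i ∈ Icc 1 n, i := ⟨_, rfl⟩
  have hicc : Icc 1 n = Ioc 0 n := by rw [← Finset.Icc_add_one_left_eq_Ioc, zero_add]
  have hT2 : T * 2 = (n+1) * n := by
    rw [hTdef, hicc] 
    rw [ sum_Ioc_id_mul_two 0 n (Nat.zero_le n)]
    rw [Nat.sub_zero, Nat.zero_add]
  -- representatives
  have hrep : ∀ i ∈ Finset.Icc 1 n, ∃ v, G.degree v = i := by
    intro i hi
    rw [← hD] at hi
    simp only [degreeSet, Finset.mem_image, Finset.mem_univ, true_and] at hi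
    exact hi
  have hne : Nonempty (Fin p) := by
    have h1 : (1:ℕ) ∈ Finset.Icc 1 n := by simp only [mem_Icc]; omega
    obtain ⟨v, -⟩ := hrep 1 h1
    exact ⟨v⟩
  choose! f hf using hrep
  have hinj : ∀ a ∈ Icc 1 n, ∀ b ∈ Icc 1 n, f a = f b → a = b := by
    intro a ha b hb h
    rw [← hf a ha, ← hf b hb, h]
  set R := (Icc 1 n).image f with hR
  have hRsum : ∑ v ∈ R, G.degree v = T := by
    rw [hR, Finset.sum_image hinj, hTdef]
    exact Finset.sum_congr rfl hf
  obtain ⟨s, hs⟩ : ∃ s, s = ∑ v ∈ univ \ R, G.degree v := ⟨_, rfl⟩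
  have hsplit : T + s = 2 * q := by
    rw [← hsum, ← hRsum, hs, add_comm]
    exact Finset.sum_sdiff (Finset.subset_univ R)
  -- reduce to s ≥ (n+1)/2
  have hnn : n * (n+1) = T * 2 := by rw [hT2]; ring
  suffices hsge : (n+1)/2 ≤ s by
    have h1 : n * (n+1) / 2 = T := by rw [hnn]; omega
    rw [h1]
    omega
  by_contra hlt
  push_neg at hlt
  have hpar : 2 ∣ (T + (n+1)/2) := parity_lemma n T (by rw [← hT2]; ring)
  have hs2 : s + 2 ≤ (n+1)/2 := by omega
  set k := s + 1 with hk
  have hkn : 2 * k + 1 ≤ n := by omega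
  -- the top-degree set K
  set K := (Icc (n-k+1) n).image f with hK
  have hsub : Icc (n-k+1) n ⊆ Icc 1 n := by
    intro i hi; simp only [mem_Icc] at *; omega
  have hinjK : ∀ a ∈ Icc (n-k+1) n, ∀ b ∈ Icc (n-k+1) n, f a = f b → a = b :=
    fun a ha b hb h => hinj a (hsub ha) b (hsub hb) h
  have hKcard : K.card = k := by
    rw [hK, Finset.card_image_of_injOn (fun a ha b hb h => hinjK a ha b hb h), Nat.card_Icc]
    omega
  have hKsum : ∑ v ∈ K, G.degree v = ∑ i ∈ Icc (n-k+1) n, i := by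
    rw [hK, Finset.sum_image hinjK]
    exact sum_congr rfl (fun i hi => hf i (hsub hi))
  -- degree split
  have hdeg_split : ∀ v ∈ K, G.degree v
      = (G.neighborFinset v ∩ K).card + (G.neighborFinset v \ K).card := by
    intro v _
    rw [Finset.card_inter_add_card_sdiff, SimpleGraph.card_neighborFinset_eq_degree]
  have hbound1 : ∀ v ∈ K, (G.neighborFinset v ∩ K).card ≤ k - 1 := by
    intro v hv
    have hsub2 : G.neighborFinset v ∩ K ⊆ K.erase v := by
      intro u hu
      simp only [mem_inter, SimpleGraph.mem_neighborFinset] at hu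
      refine Finset.mem_erase.2 ⟨?_, hu.2⟩
      intro h
      exact G.loopless.irrefl v (h ▸ hu.1)
    calc (G.neighborFinset v ∩ K).card ≤ (K.erase v).card := Finset.card_le_card hsub2
      _ = k - 1 := by rw [Finset.card_erase_of_mem hv, hKcard]
  have hcross : ∑ v ∈ K, (G.neighborFinset v \ K).card
      = ∑ u ∈ univ \ K, (K.filter (fun v => G.Adj v u)).card := by
    have h1 : ∀ v, G.neighborFinset v \ K = (univ \ K).filter (fun u => G.Adj v u) := by
      intro v; ext u
      simp only [Finset.mem_sdiff, SimpleGraph.mem_neighborFinset, Finset.mem_filter,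
        Finset.mem_univ, true_and]
      tauto
    simp_rw [h1, Finset.card_filter]
    exact Finset.sum_comm
  have hbound2 : ∀ u : Fin p, (K.filter (fun v => G.Adj v u)).card ≤ min (G.degree u) k := by
    intro u
    refine le_min ?_ ?_
    · have h1 : K.filter (fun v => G.Adj v u) ⊆ G.neighborFinset u := by
        intro v hv
        simp only [mem_filter] at hv
        exact (SimpleGraph.mem_neighborFinset G u v).2 hv.2.symm
      calc (K.filter (fun v => G.Adj v u)).card ≤ (G.neighborFinset u).card :=
            Finset.card_le_card h1
        _ = G.degree u := SimpleGraph.card_neighborFinset_eq_degree G u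
    · calc (K.filter (fun v => G.Adj v u)).card ≤ K.card :=
            Finset.card_le_card (Finset.filter_subset _ _)
        _ = k := hKcard
  -- split univ \ K
  set K' := (Icc 1 (n-k)).image f with hK'
  have hsubK' : Icc 1 (n-k) ⊆ Icc 1 n := by
    intro i hi; simp only [mem_Icc] at *; omega
  have hKsubR : K ⊆ R := by
    rw [hK, hR]; exact Finset.image_subset_image hsub
  have hK'subR : K' ⊆ R := by
    rw [hK', hR]; exact Finset.image_subset_image hsubK'
  have hK'K : ∀ u, u ∈ K' → u ∉ K := by
    intro u hu1 hu2
    rw [hK', Finset.mem_image] at hu1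
    rw [hK, Finset.mem_image] at hu2
    obtain ⟨i, hi, rfl⟩ := hu1
    obtain ⟨j, hj, hji⟩ := hu2
    have := hinj j (hsub hj) i (hsubK' hi) hji
    simp only [mem_Icc] at hi hj
    omega
  have hRKK' : ∀ u, u ∈ R → u ∉ K → u ∈ K' := by
    intro u hu1 hu2
    rw [hR, Finset.mem_image] at hu1
    obtain ⟨i, hi, rfl⟩ := hu1
    rw [hK', Finset.mem_image]
    refine ⟨i, ?_, rfl⟩
    simp only [mem_Icc] at hi ⊢
    refine ⟨hi.1, ?_⟩
    by_contra hgt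
    apply hu2
    rw [hK, Finset.mem_image]
    exact ⟨i, by simp only [mem_Icc]; omega, rfl⟩
  have hsplit2 : univ \ K = K' ∪ (univ \ R) := by
    ext u
    simp only [Finset.mem_sdiff, Finset.mem_union, Finset.mem_univ, true_and]
    constructor
    · intro hu
      by_cases hur : u ∈ R
      · exact Or.inl (hRKK' u hur hu)
      · exact Or.inr hur
    · rintro (hu | hu)
      · exact hK'K u hu
      · intro hc; exact hu (hKsubR hc)
  have hdisj : Disjoint K' (univ \ R) := by
    rw [Finset.disjoint_left]
    intro u hu1 hu2
    rw [Finset.mem_sdiff] at hu2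
    exact hu2.2 (hK'subR hu1)
  have hinjK' : ∀ a ∈ Icc 1 (n-k), ∀ b ∈ Icc 1 (n-k), f a = f b → a = b :=
    fun a ha b hb h => hinj a (hsubK' ha) b (hsubK' hb) h
  have hb3 : ∑ u ∈ K', min (G.degree u) k = ∑ i ∈ Icc 1 (n-k), min i k := by
    rw [hK', Finset.sum_image hinjK']
    exact sum_congr rfl (fun i hi => by rw [hf i (hsubK' hi)])
  have hb4 : ∑ u ∈ univ \ R, min (G.degree u) k ≤ s := by
    rw [hs]
    exact Finset.sum_le_sum (fun u _ => min_le_left _ _)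
  -- the main inequality
  have main : ∑ i ∈ Icc (n-k+1) n, i
      ≤ k * (k-1) + ((∑ i ∈ Icc 1 (n-k), min i k) + s) := by
    calc ∑ i ∈ Icc (n-k+1) n, i = ∑ v ∈ K, G.degree v := hKsum.symm
      _ = ∑ v ∈ K, ((G.neighborFinset v ∩ K).card + (G.neighborFinset v \ K).card) :=
          Finset.sum_congr rfl hdeg_split
      _ = (∑ v ∈ K, (G.neighborFinset v ∩ K).card)
            + ∑ v ∈ K, (G.neighborFinset v \ K).card := Finset.sum_add_distrib
      _ ≤ k * (k-1) + ∑ u ∈ univ \ K, (K.filter (fun v => G.Adj v u)).card := by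
          refine add_le_add ?_ (le_of_eq hcross)
          calc (∑ v ∈ K, (G.neighborFinset v ∩ K).card) ≤ ∑ v ∈ K, (k-1) :=
                Finset.sum_le_sum hbound1
            _ = k * (k-1) := by rw [Finset.sum_const, hKcard, smul_eq_mul]
      _ ≤ k * (k-1) + ∑ u ∈ univ \ K, min (G.degree u) k := by
          refine add_le_add_right (Finset.sum_le_sum (fun u _ => hbound2 u)) _
      _ = k * (k-1) + ((∑ u ∈ K', min (G.degree u) k) + ∑ u ∈ univ \ R, min (G.degree u) k) := by
          rw [hsplit2, Finset.sum_union hdisj]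
      _ ≤ k * (k-1) + ((∑ i ∈ Icc 1 (n-k), min i k) + s) := by
          rw [hb3]
          exact add_le_add_right (add_le_add_right hb4 _) _
  -- arithmetic
  have hA : (∑ i ∈ Icc (n-k+1) n, i) * 2 = ((n-k) + n + 1) * (n - (n-k)) := by
    rw [show Icc (n-k+1) n = Ioc (n-k) n from (Finset.Icc_add_one_left_eq_Ioc (n-k) n)]
    exact sum_Ioc_id_mul_two _ _ (by omega)
  have hBsplit : ∑ i ∈ Icc 1 (n-k), min i k = (∑ i ∈ Ioc 0 k, i) + (n - k - k) * k := by
    have h0 : Icc 1 (n-k) = Ioc 0 (n-k) := by rw [← Finset.Icc_add_one_left_eq_Ioc, zero_add]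
    rw [h0, ← Finset.sum_Ioc_consecutive (fun i => min i k) (Nat.zero_le k)
      (by omega : k ≤ n - k)]
    congr 1
    · exact sum_congr rfl (fun i hi => by simp only [mem_Ioc] at hi; omega)
    · rw [show ∑ i ∈ Ioc k (n-k), min i k = ∑ i ∈ Ioc k (n-k), k from
        sum_congr rfl (fun i hi => by simp only [mem_Ioc] at hi; omega)]
      rw [Finset.sum_const, Nat.card_Ioc, smul_eq_mul]
  have hC : (∑ i ∈ Ioc 0 k, i) * 2 = (k+1) * k := by
    rw [sum_Ioc_id_mul_two 0 k (Nat.zero_le k), Nat.sub_zero, Nat.zero_add]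
  obtain ⟨SA, hSA⟩ : ∃ x, x = ∑ i ∈ Icc (n-k+1) n, i := ⟨_, rfl⟩
  obtain ⟨SB, hSB⟩ : ∃ x, x = ∑ i ∈ Ioc 0 k, i := ⟨_, rfl⟩
  rw [← hSA] at main hA
  rw [← hSB] at hC
  rw [hBsplit, ← hSB] at main
  obtain ⟨b, hab⟩ : ∃ b, n - k = k + b := ⟨n - k - k, by omega⟩
  have e1 : n - (n - k) = k := by omega
  have e2 : n - k - k = b := by omega
  have e3 : n = 2 * k + b := by omega
  have e4 : k - 1 = s := by omega
  rw [e1, hab, e3] at hA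
  rw [e2, e4] at main
  rw [hk] at main hA hC
  nlinarith [main, hA, hC]

/-- The least number of edges of a graph with degree set `{1, 2, …, n}` is
`(1/2)(n(n+1)/2 + ⌈n/2⌉)`. -/
theorem lq_interval_one (n : ℕ) (hn : 0 < n) :
    2 * lq (Finset.Icc 1 n) = n * (n + 1) / 2 + (n + 1) / 2 := by
  have hdeg : @degreeSet _ _ (G0 n) (G0adjDec n) = Finset.Icc 1 n := G0_degreeSet n hn
  have hmem : (@SimpleGraph.edgeFinset _ (G0 n)
      (@SimpleGraph.fintypeEdgeSet _ (G0 n) _ (G0adjDec n))).card ∈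
      {q | ∃ (p : ℕ) (G : SimpleGraph (Fin p)) (inst : DecidableRel G.Adj),
        @degreeSet _ _ G inst = Finset.Icc 1 n ∧
        (@SimpleGraph.edgeFinset _ G (@SimpleGraph.fintypeEdgeSet _ G _ inst)).card = q} :=
    ⟨n+1, G0 n, G0adjDec n, hdeg, rfl⟩
  have h2card : 2 * (@SimpleGraph.edgeFinset _ (G0 n)
      (@SimpleGraph.fintypeEdgeSet _ (G0 n) _ (G0adjDec n))).card
      = n * (n+1) / 2 + (n+1)/2 := by
    rw [← SimpleGraph.sum_degrees_eq_twice_card_edges]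
    exact G0_sum n hn
  have hub : lq (Finset.Icc 1 n) ≤ (@SimpleGraph.edgeFinset _ (G0 n)
      (@SimpleGraph.fintypeEdgeSet _ (G0 n) _ (G0adjDec n))).card := Nat.sInf_le hmem
  have hne : {q | ∃ (p : ℕ) (G : SimpleGraph (Fin p)) (inst : DecidableRel G.Adj),
        @degreeSet _ _ G inst = Finset.Icc 1 n ∧
        (@SimpleGraph.edgeFinset _ G (@SimpleGraph.fintypeEdgeSet _ G _ inst)).card = q}.Nonempty :=
    ⟨_, hmem⟩
  have hmemInf := Nat.sInf_mem hne
  obtain ⟨p, G, inst, hD, hcard⟩ := hmemInf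
  unfold lq
  have hlb : n * (n+1) / 2 + (n+1)/2 ≤
      2 * sInf {q | ∃ (p : ℕ) (G : SimpleGraph (Fin p)) (inst : DecidableRel G.Adj),
        @degreeSet _ _ G inst = Finset.Icc 1 n ∧
        (@SimpleGraph.edgeFinset _ G (@SimpleGraph.fintypeEdgeSet _ G _ inst)).card = q} := by
    rw [← hcard]
    exact @lower_bound n p hn G inst hD
  have hub2 : sInf {q | ∃ (p : ℕ) (G : SimpleGraph (Fin p)) (inst : DecidableRel G.Adj),
        @degreeSet _ _ G inst = Finset.Icc 1 n ∧
        (@SimpleGraph.edgeFinset _ G (@SimpleGraph.fintypeEdgeSet _ G _ inst)).card = q}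
      ≤ (@SimpleGraph.edgeFinset _ (G0 n)
      (@SimpleGraph.fintypeEdgeSet _ (G0 n) _ (G0adjDec n))).card := Nat.sInf_le hmem
  have h3 : 2 * sInf {q | ∃ (p : ℕ) (G : SimpleGraph (Fin p)) (inst : DecidableRel G.Adj),
        @degreeSet _ _ G inst = Finset.Icc 1 n ∧
        (@SimpleGraph.edgeFinset _ G (@SimpleGraph.fintypeEdgeSet _ G _ inst)).card = q}
      ≤ n * (n+1) / 2 + (n+1)/2 := by
    rw [← h2card]
    omega
  exact le_antisymm h3 hlb
end

section
/- For all positive integers m ≤ n, the least number of edges of a graph with degree set {m, m+1, ..., n} is at least the least number of edges of a graph with degree set {1, 2, ..., n}. -/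
set_option maxHeartbeats 2000000

open Finset

/-- The half-graph-like construction: on `Fin (n+1)`, join `i ≠ j` iff `i + j + m ≥ n + 1`.
Its degree set is `{m, …, n}` when `1 ≤ m ≤ n`. -/
def Gc (m n : ℕ) : SimpleGraph (Fin (n+1)) where
  Adj i j := i ≠ j ∧ n + 1 ≤ i.val + j.val + m
  symm := by constructor; intro i j ⟨h1, h2⟩; exact ⟨h1.symm, by omega⟩
  loopless := by constructor; intro i ⟨h1, _⟩; exact h1 rfl

instance GcDec (m n : ℕ) : DecidableRel (Gc m n).Adj := fun i j =>
  inferInstanceAs (Decidable (i ≠ j ∧ n + 1 ≤ i.val + j.val + m))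

lemma Gc_degree (m n : ℕ) (i : Fin (n+1)) :
    (Gc m n).degree i = (n + 1 - (n + 1 - (i.val + m))) -
      (if n + 1 - (i.val + m) ≤ i.val then 1 else 0) := by
  classical
  set b := n + 1 - (i.val + m) with hb
  rw [← SimpleGraph.card_neighborFinset_eq_degree]
  have hset : (Gc m n).neighborFinset i
      = Finset.univ.filter (fun j : Fin (n+1) => b ≤ j.val ∧ j.val ≠ i.val) := by
    ext j
    simp only [SimpleGraph.mem_neighborFinset, Finset.mem_filter, Finset.mem_univ, true_and]
    constructor
    · rintro ⟨h1, h2⟩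
      refine ⟨by omega, fun h => h1 (Fin.ext h.symm)⟩
    · rintro ⟨h1, h2⟩
      exact ⟨fun h => h2 (by rw [h]), by omega⟩
  rw [hset]
  have hcard : (Finset.univ.filter (fun j : Fin (n+1) => b ≤ j.val ∧ j.val ≠ i.val)).card
      = ((Finset.range (n+1)).filter (fun x => b ≤ x ∧ x ≠ i.val)).card := by
    apply Finset.card_nbij (fun j => j.val)
    · intro j hj
      simp only [Finset.mem_coe, Finset.mem_filter, Finset.mem_univ, true_and] at hj
      simp only [Finset.mem_coe, Finset.mem_filter, Finset.mem_range]
      exact ⟨j.isLt, hj⟩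
    · intro x hx y hy hxy
      exact Fin.ext hxy
    · intro x hx
      simp only [Finset.coe_filter, Set.mem_setOf_eq, Finset.mem_range] at hx
      exact ⟨⟨x, hx.1⟩, by simpa using hx.2, rfl⟩
  rw [hcard]
  have h2 : ((Finset.range (n+1)).filter (fun x => b ≤ x ∧ x ≠ i.val))
      = (Finset.Ico b (n+1)).erase i.val := by
    ext x
    simp only [Finset.mem_filter, Finset.mem_range, Finset.mem_erase, Finset.mem_Ico]
    constructor
    · rintro ⟨h1, h2, h3⟩; exact ⟨h3, h2, h1⟩
    · rintro ⟨h1, h2, h3⟩; exact ⟨h3, h2, h1⟩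
  rw [h2]
  by_cases hbi : b ≤ i.val
  · rw [Finset.card_erase_of_mem (by simp [Finset.mem_Ico, hbi, i.isLt])]
    rw [Nat.card_Ico]
    simp [hbi]
  · rw [Finset.erase_eq_of_notMem (by simp only [Finset.mem_Ico]; omega)]
    rw [Nat.card_Ico]
    simp [hbi]

lemma Gc_degreeSet (m n : ℕ) (hm : 1 ≤ m) (hmn : m ≤ n) :
    degreeSet (Gc m n) = Finset.Icc m n := by
  ext k
  simp only [degreeSet, Finset.mem_image, Finset.mem_univ, true_and, Finset.mem_Icc]
  constructor
  · rintro ⟨i, rfl⟩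
    rw [Gc_degree]
    have := i.isLt
    split_ifs <;> omega
  · rintro ⟨h1, h2⟩
    by_cases hc : 2 * (k - m) + m ≤ n
    · refine ⟨⟨k - m, by omega⟩, ?_⟩
      rw [Gc_degree]
      simp only
      split_ifs <;> omega
    · refine ⟨⟨k - m + 1, by omega⟩, ?_⟩
      rw [Gc_degree]
      simp only
      split_ifs <;> omega

lemma Gc_sum_degrees (n : ℕ) (hn : 1 ≤ n) :
    2 * (∑ v, (Gc 1 n).degree v) = n * (n + 1) + 2 * ((n + 1) / 2) := by
  have h1 : (∑ v, (Gc 1 n).degree v)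
      = ∑ x ∈ Finset.range (n+1), (x + if n ≤ 2 * x then 0 else 1) := by
    rw [← Fin.sum_univ_eq_sum_range]
    apply Finset.sum_congr rfl
    intro i _
    rw [Gc_degree]
    have := i.isLt
    split_ifs <;> omega
  rw [h1, Finset.sum_add_distrib]
  have h2 : (∑ x ∈ Finset.range (n+1), if n ≤ 2 * x then 0 else 1)
      = ((n+1)/2) := by
    have e1 : (∑ x ∈ Finset.range (n+1), if n ≤ 2 * x then 0 else 1)
        = ∑ x ∈ Finset.range (n+1), if ¬ n ≤ 2 * x then 1 else 0 := by
      apply Finset.sum_congr rfl; intro x _; by_cases h : n ≤ 2 * x <;> simp [h]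
    rw [e1, ← Finset.card_filter]
    have e2 : (Finset.range (n+1)).filter (fun x => ¬ n ≤ 2 * x)
        = Finset.range ((n+1)/2) := by
      ext x; simp only [Finset.mem_filter, Finset.mem_range, not_le]; omega
    rw [e2, Finset.card_range]
  rw [h2]
  have h3 := Finset.sum_range_id_mul_two (n+1)
  simp only [Nat.add_sub_cancel] at h3
  have h4 : (∑ i ∈ Finset.range (n+1), i) * 2 = n * (n+1) := by rw [h3]; ring
  omega

lemma gauss_Icc (a b : ℕ) : 2 * (∑ k ∈ Finset.Icc a b, k) = (a + b) * (b + 1 - a) := by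
  by_cases h : a ≤ b
  · have hIcc : Finset.Icc a b = Finset.Ico a (b+1) := by rw [Finset.Ico_add_one_right_eq_Icc]
    rw [hIcc, Finset.sum_Ico_eq_sum_range]
    set c := b + 1 - a with hc
    have hc1 : a + c = b + 1 := by omega
    rw [Finset.sum_add_distrib, Finset.sum_const, Finset.card_range, smul_eq_mul]
    have h1c : 1 ≤ c := by omega
    have h2s := Finset.sum_range_id_mul_two c
    zify [h1c] at h2s ⊢
    have hc1' : (a : ℤ) + c = b + 1 := by exact_mod_cast hc1
    nlinarith [h2s, hc1']
  · rw [Finset.Icc_eq_empty (by omega)]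
    simp
    omega

lemma sum_ge_subset {V : Type} [DecidableEq V] (D : V → ℕ) (R S : Finset V) (hRS : R ⊆ S)
    (c : ℕ) (hc : ∀ v ∈ S, c ≤ D v) :
    ∑ v ∈ R, D v + (S.card - R.card) * c ≤ ∑ v ∈ S, D v := by
  rw [← Finset.sum_sdiff hRS]
  have h1 : (S \ R).card * c ≤ ∑ v ∈ S \ R, D v := by
    have := Finset.card_nsmul_le_sum (S \ R) D c
      (fun v hv => hc v (Finset.mem_sdiff.mp hv).1)
    simpa using this
  rw [← Finset.card_sdiff_of_subset hRS]
  omega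

lemma sum_deg_le_double {V : Type} [Fintype V] [DecidableEq V] (G : SimpleGraph V)
    [DecidableRel G.Adj] (S : Finset V) :
    ∑ v ∈ S, G.degree v ≤ S.card * (S.card - 1) + ∑ v ∈ Finset.univ \ S, G.degree v := by
  have hdeg : ∀ v, G.degree v = (G.neighborFinset v ∩ S).card + (G.neighborFinset v \ S).card := by
    intro v
    rw [← SimpleGraph.card_neighborFinset_eq_degree, Finset.card_inter_add_card_sdiff]
  have h1 : ∀ v ∈ S, (G.neighborFinset v ∩ S).card ≤ S.card - 1 := by
    intro v hv
    have hsub : G.neighborFinset v ∩ S ⊆ S.erase v := by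
      intro w hw
      rw [Finset.mem_erase]
      rw [Finset.mem_inter, SimpleGraph.mem_neighborFinset] at hw
      exact ⟨fun h => G.loopless.irrefl v (h ▸ hw.1), hw.2⟩
    calc (G.neighborFinset v ∩ S).card ≤ (S.erase v).card := Finset.card_le_card hsub
      _ = S.card - 1 := Finset.card_erase_of_mem hv
  have h2 : ∑ v ∈ S, (G.neighborFinset v \ S).card
      = ∑ w ∈ Finset.univ \ S, (G.neighborFinset w ∩ S).card := by
    have e1 : ∀ v, G.neighborFinset v \ S = (Finset.univ \ S).filter (fun w => G.Adj v w) := by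
      intro v; ext w
      simp [SimpleGraph.mem_neighborFinset, Finset.mem_sdiff, Finset.mem_filter, and_comm]
    have e2 : ∀ w, G.neighborFinset w ∩ S = S.filter (fun v => G.Adj w v) := by
      intro w; ext v
      simp [SimpleGraph.mem_neighborFinset, Finset.mem_inter, Finset.mem_filter, and_comm]
    calc ∑ v ∈ S, (G.neighborFinset v \ S).card
        = ∑ v ∈ S, ∑ w ∈ Finset.univ \ S, (if G.Adj v w then 1 else 0) := by
          apply Finset.sum_congr rfl; intro v _; rw [e1, Finset.card_filter]
      _ = ∑ w ∈ Finset.univ \ S, ∑ v ∈ S, (if G.Adj v w then 1 else 0) := Finset.sum_comm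
      _ = ∑ w ∈ Finset.univ \ S, ∑ v ∈ S, (if G.Adj w v then 1 else 0) := by
          apply Finset.sum_congr rfl; intro w _; apply Finset.sum_congr rfl; intro v _
          simp [G.adj_comm]
      _ = ∑ w ∈ Finset.univ \ S, (G.neighborFinset w ∩ S).card := by
          apply Finset.sum_congr rfl; intro w _; rw [e2, Finset.card_filter]
  have h3 : ∀ w, (G.neighborFinset w ∩ S).card ≤ G.degree w := by
    intro w
    rw [← SimpleGraph.card_neighborFinset_eq_degree]
    exact Finset.card_le_card (Finset.inter_subset_left)
  calc ∑ v ∈ S, G.degree v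
      = ∑ v ∈ S, (G.neighborFinset v ∩ S).card + ∑ v ∈ S, (G.neighborFinset v \ S).card := by
        rw [← Finset.sum_add_distrib]; exact Finset.sum_congr rfl (fun v _ => hdeg v)
    _ ≤ S.card * (S.card - 1) + ∑ w ∈ Finset.univ \ S, (G.neighborFinset w ∩ S).card := by
        gcongr
        · calc ∑ v ∈ S, (G.neighborFinset v ∩ S).card ≤ ∑ v ∈ S, (S.card - 1) :=
              Finset.sum_le_sum h1
            _ = S.card * (S.card - 1) := by rw [Finset.sum_const, smul_eq_mul]
        · rw [h2]
    _ ≤ S.card * (S.card - 1) + ∑ v ∈ Finset.univ \ S, G.degree v :=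
        Nat.add_le_add_left (Finset.sum_le_sum fun w _ => h3 w) _

lemma arith_small (m n t a SA SB Stot Ghi : ℕ)
    (htn1 : n ≤ 2*t) (htn2 : 2*t ≤ n+1) (hmt : m < t) (hm : 1 ≤ m) (hmn : m ≤ n)
    (haj : n+1-t ≤ a) (hsa : a ≤ t+1)
    (hgh : 2*Ghi = (t+n)*(n+1-t))
    (hA1 : Ghi + (a - (n+1-t))*t ≤ SA)
    (hdc : SA ≤ a*(a-1)+SB)
    (hsplit : SB + SA = Stot) :
    n*(n+1) + 2*t ≤ 2*Stot := by
  have h1t : 1 ≤ t := by omega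
  rcases (by omega : 2*t = n + 1 ∨ 2*t = n) with hr | hr
  · -- n = 2t - 1, a ∈ {t, t+1}
    rw [show n+1-t = t by omega] at hgh hA1
    rcases (by omega : a = t ∨ a = t + 1) with ha | ha <;> rw [ha] at hA1 hdc
    · rw [show t - t = 0 by omega, Nat.zero_mul, Nat.add_zero] at hA1
      zify [h1t] at hdc
      zify at hgh hA1 hsplit ⊢
      nlinarith [hgh, hA1, hdc, hsplit, (by omega : (n:ℤ) = 2*t - 1)]
    · rw [show t + 1 - t = 1 by omega, Nat.one_mul] at hA1
      zify [show (1:ℕ) ≤ t + 1 by omega] at hdc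
      zify at hgh hA1 hsplit ⊢
      nlinarith [hgh, hA1, hdc, hsplit, (by omega : (n:ℤ) = 2*t - 1)]
  · -- n = 2t, a = t+1
    rw [show n+1-t = t+1 by omega] at hgh hA1
    have ha : a = t + 1 := by omega
    rw [ha] at hA1 hdc
    rw [show t + 1 - (t+1) = 0 by omega, Nat.zero_mul, Nat.add_zero] at hA1
    zify [show (1:ℕ) ≤ t + 1 by omega] at hdc
    zify at hgh hA1 hsplit ⊢
    nlinarith [hgh, hA1, hdc, hsplit, (by omega : (n:ℤ) = 2*t)]

lemma arith_large (m n t a p SA SB Stot Ghi Glo : ℕ)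
    (htn1 : n ≤ 2*t) (htn2 : 2*t ≤ n+1) (hmt : m < t) (hm : 1 ≤ m) (hmn : m ≤ n)
    (haj : n+1-t ≤ a) (hsa : t + 1 < a) (hp : n + 1 ≤ p) (hap : a ≤ p) (hql : t - m ≤ p - a)
    (hgh : 2*Ghi = (t+n)*(n+1-t))
    (hgl : 2*Glo = (m+(t-1))*(t-1+1-m))
    (hA1 : Ghi + (a - (n+1-t))*t ≤ SA)
    (hA2 : Glo + ((p - a) - (t-m))*m ≤ SB)
    (hsplit : SB + SA = Stot) :
    n*(n+1) + 2*t ≤ 2*Stot := by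
  have h1t : 1 ≤ t := by omega
  obtain ⟨e, he1, he2⟩ : ∃ e, 1 ≤ e ∧ m + e = t := ⟨t - m, by omega, by omega⟩
  obtain ⟨x, hx⟩ : ∃ x, a = t + 2 + x := ⟨a - (t+2), by omega⟩
  obtain ⟨y, hy⟩ : ∃ y, p = a + e + y := ⟨p - a - e, by omega⟩
  rw [show t-1+1-m = e by omega] at hgl
  have hL : m + (t - 1) + 1 = 2*m + e := by omega
  rw [show (p-a)-(t-m) = y by omega] at hA2
  rcases (by omega : 2*t = n + 1 ∨ 2*t = n) with hr | hr
  · rw [show n+1-t = t by omega] at hgh hA1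
    rw [show a - t = x + 2 by omega] at hA1
    have hpn : x + y + 2 ≥ m := by omega
    zify [h1t] at hgh hgl hA1 hA2 hsplit hL ⊢
    nlinarith [hgh, hgl, hA1, hA2, hsplit, hL, (by omega : (n:ℤ) = 2*t - 1),
      (by omega : (m:ℤ) + e = t),
      mul_nonneg (by omega : (0:ℤ) ≤ (e:ℤ)) (by omega : (0:ℤ) ≤ (x:ℤ)),
      mul_nonneg (by omega : (0:ℤ) ≤ (m:ℤ)) (by omega : (0:ℤ) ≤ (y:ℤ)),
      mul_nonneg (by omega : (0:ℤ) ≤ (m:ℤ)) (by zify at hpn; omega : (0:ℤ) ≤ (x:ℤ)+y+2-m),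
      mul_nonneg (by omega : (0:ℤ) ≤ (m:ℤ)) (by omega : (0:ℤ) ≤ (m:ℤ)-1)]
  · rw [show n+1-t = t+1 by omega] at hgh hA1
    rw [show a - (t+1) = x + 1 by omega] at hA1
    have hpn : x + y + 1 ≥ m := by omega
    zify [h1t] at hgh hgl hA1 hA2 hsplit hL ⊢
    nlinarith [hgh, hgl, hA1, hA2, hsplit, hL, (by omega : (n:ℤ) = 2*t),
      (by omega : (m:ℤ) + e = t),
      mul_nonneg (by omega : (0:ℤ) ≤ (e:ℤ)) (by omega : (0:ℤ) ≤ (x:ℤ)),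
      mul_nonneg (by omega : (0:ℤ) ≤ (m:ℤ)) (by omega : (0:ℤ) ≤ (y:ℤ)),
      mul_nonneg (by omega : (0:ℤ) ≤ (m:ℤ)) (by zify at hpn; omega : (0:ℤ) ≤ (x:ℤ)+y+1-m),
      mul_nonneg (by omega : (0:ℤ) ≤ (m:ℤ)) (by omega : (0:ℤ) ≤ (m:ℤ)-1)]
lemma sum_deg_ge {V : Type} [Fintype V] [DecidableEq V] (G : SimpleGraph V) [DecidableRel G.Adj]
    (m n : ℕ) (hm : 1 ≤ m) (hmn : m ≤ n) (hset : degreeSet G = Finset.Icc m n) :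
    n * (n + 1) + 2 * ((n + 1) / 2) ≤ 2 * ∑ v, G.degree v := by
  classical
  set t : ℕ := (n + 1) / 2 with hts
  have htn : n ≤ 2 * t ∧ 2 * t ≤ n + 1 := by omega
  have hrep : ∀ k ∈ Finset.Icc m n, ∃ v, G.degree v = k := by
    intro k hk
    have : k ∈ degreeSet G := hset ▸ hk
    simpa [degreeSet, Finset.mem_image] using this
  have hub : ∀ v : V, m ≤ G.degree v ∧ G.degree v ≤ n := by
    intro v
    have : G.degree v ∈ degreeSet G :=
      Finset.mem_image_of_mem _ (Finset.mem_univ v)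
    rw [hset, Finset.mem_Icc] at this
    exact this
  have hVne : Nonempty V := by
    obtain ⟨v, -⟩ := hrep n (by rw [Finset.mem_Icc]; omega)
    exact ⟨v⟩
  have hrep' : ∀ k : ℕ, ∃ v : V, (k ∈ Finset.Icc m n → G.degree v = k) := by
    intro k
    by_cases hk : k ∈ Finset.Icc m n
    · exact (hrep k hk).imp (fun v h _ => h)
    · exact ⟨Classical.arbitrary V, fun h => absurd h hk⟩
  choose f hf using hrep'
  have hp : n + 1 ≤ Fintype.card V := by
    obtain ⟨v, hv⟩ := hrep n (by rw [Finset.mem_Icc]; omega)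
    have := G.degree_lt_card_verts v
    omega
  set p : ℕ := Fintype.card V with hps
  set Stot : ℕ := ∑ v, G.degree v with hSt
  -- global bound
  have hinj : ∀ x ∈ Finset.Icc m n, ∀ y ∈ Finset.Icc m n, f x = f y → x = y := by
    intro x hx y hy hxy
    rw [← hf x hx, ← hf y hy, hxy]
  have hglob : (∑ k ∈ Finset.Icc m n, k) + (p - (n + 1 - m)) * m ≤ Stot := by
    have h1 := sum_ge_subset (fun v => G.degree v) ((Finset.Icc m n).image f) Finset.univ
      (Finset.subset_univ _) m (fun v _ => (hub v).1)
    rw [Finset.sum_image hinj, Finset.card_univ, Finset.card_image_of_injOn hinj,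
      Nat.card_Icc] at h1
    have hsum : ∑ x ∈ Finset.Icc m n, G.degree (f x) = ∑ k ∈ Finset.Icc m n, k :=
      Finset.sum_congr rfl (fun k hk => hf k hk)
    rw [hsum] at h1
    exact h1
  by_cases hcase : 2 * t ≤ m * (m + 1)
  · -- case 1 : naive bound suffices
    have hg := gauss_Icc m n
    have h1 : m ≤ p - (n + 1 - m) := by omega
    have h2 : (∑ k ∈ Finset.Icc m n, k) + m * m ≤ Stot := by
      calc (∑ k ∈ Finset.Icc m n, k) + m * m
          ≤ (∑ k ∈ Finset.Icc m n, k) + (p - (n + 1 - m)) * m := by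
            have := Nat.mul_le_mul_right m h1; omega
        _ ≤ Stot := hglob
    zify [show m ≤ n + 1 by omega] at hg
    zify at h2 ⊢
    nlinarith [hg, h2, htn.1, htn.2, hcase]
  · -- case 2
    have hmt : m < t := by nlinarith
    set A : Finset V := Finset.univ.filter (fun v => t ≤ G.degree v) with hAs
    set a : ℕ := A.card with has
    -- high representatives
    have hsubh : (Finset.Icc t n).image f ⊆ A := by
      intro v hv
      rw [Finset.mem_image] at hv
      obtain ⟨k, hk, rfl⟩ := hv
      rw [Finset.mem_Icc] at hk
      have : G.degree (f k) = k := hf k (by rw [Finset.mem_Icc]; omega)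
      rw [hAs, Finset.mem_filter]
      exact ⟨Finset.mem_univ _, by omega⟩
    have hinjh : ∀ x ∈ Finset.Icc t n, ∀ y ∈ Finset.Icc t n, f x = f y → x = y := by
      intro x hx y hy hxy
      rw [Finset.mem_Icc] at hx hy
      exact hinj x (by rw [Finset.mem_Icc]; omega) y (by rw [Finset.mem_Icc]; omega) hxy
    have hAc : ∀ v ∈ A, t ≤ G.degree v := by
      intro v hv; rw [hAs, Finset.mem_filter] at hv; exact hv.2
    have hA1 : (∑ k ∈ Finset.Icc t n, k) + (a - (n + 1 - t)) * t ≤ ∑ v ∈ A, G.degree v := by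
      have h1 := sum_ge_subset (fun v => G.degree v) ((Finset.Icc t n).image f) A hsubh t hAc
      rw [Finset.sum_image hinjh, Finset.card_image_of_injOn hinjh, Nat.card_Icc] at h1
      have hsum : ∑ x ∈ Finset.Icc t n, G.degree (f x) = ∑ k ∈ Finset.Icc t n, k := by
        apply Finset.sum_congr rfl
        intro k hk
        rw [Finset.mem_Icc] at hk
        exact hf k (by rw [Finset.mem_Icc]; omega)
      rw [hsum] at h1
      exact h1
    have haj : n + 1 - t ≤ a := by
      have := Finset.card_le_card hsubh
      rwa [Finset.card_image_of_injOn hinjh, Nat.card_Icc] at this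
    -- low representatives
    have hsubl : (Finset.Icc m (t-1)).image f ⊆ Finset.univ \ A := by
      intro v hv
      rw [Finset.mem_image] at hv
      obtain ⟨k, hk, rfl⟩ := hv
      rw [Finset.mem_Icc] at hk
      have : G.degree (f k) = k := hf k (by rw [Finset.mem_Icc]; omega)
      simp only [Finset.mem_sdiff, hAs, Finset.mem_filter, Finset.mem_univ, true_and, not_le]
      omega
    have hinjl : ∀ x ∈ Finset.Icc m (t-1), ∀ y ∈ Finset.Icc m (t-1), f x = f y → x = y := by
      intro x hx y hy hxy
      rw [Finset.mem_Icc] at hx hy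
      exact hinj x (by rw [Finset.mem_Icc]; omega) y (by rw [Finset.mem_Icc]; omega) hxy
    have hcardAc : (Finset.univ \ A).card = p - a := by
      rw [Finset.card_sdiff_of_subset (Finset.subset_univ _), Finset.card_univ]
    have hA2 : (∑ k ∈ Finset.Icc m (t-1), k) + ((p - a) - (t - m)) * m
        ≤ ∑ v ∈ Finset.univ \ A, G.degree v := by
      have h1 := sum_ge_subset (fun v => G.degree v) ((Finset.Icc m (t-1)).image f) (Finset.univ \ A)
        hsubl m (fun v _ => (hub v).1)
      rw [Finset.sum_image hinjl, Finset.card_image_of_injOn hinjl, Nat.card_Icc,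
        hcardAc, show t - 1 + 1 - m = t - m by omega] at h1
      have hsum : ∑ x ∈ Finset.Icc m (t-1), G.degree (f x) = ∑ k ∈ Finset.Icc m (t-1), k := by
        apply Finset.sum_congr rfl
        intro k hk
        rw [Finset.mem_Icc] at hk
        exact hf k (by rw [Finset.mem_Icc]; omega)
      rw [hsum] at h1
      exact h1
    have hql : t - m ≤ p - a := by
      have := Finset.card_le_card hsubl
      rwa [Finset.card_image_of_injOn hinjl, Nat.card_Icc, hcardAc,
        show t - 1 + 1 - m = t - m by omega] at this
    have hap : a ≤ p := by rw [has, hps]; exact Finset.card_le_univ A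
    have hdc := sum_deg_le_double G A
    rw [← has] at hdc
    have hsplit : ∑ v ∈ Finset.univ \ A, G.degree v + ∑ v ∈ A, G.degree v = Stot :=
      Finset.sum_sdiff (Finset.subset_univ A)
    have hgh := gauss_Icc t n
    have hgl := gauss_Icc m (t-1)
    set SA : ℕ := ∑ v ∈ A, G.degree v with hSA
    set SB : ℕ := ∑ v ∈ Finset.univ \ A, G.degree v with hSB
    set Ghi : ℕ := ∑ k ∈ Finset.Icc t n, k with hGhi
    set Glo : ℕ := ∑ k ∈ Finset.Icc m (t-1), k with hGlo
    have h1a : 1 ≤ a := by omega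
    have hmn1 : m ≤ n := hmn
    clear_value SA
    clear_value SB
    clear_value Ghi
    clear_value Glo
    clear_value Stot
    clear_value a
    clear_value p
    clear_value t
    clear hsubh hinjh hAc hsubl hinjl hcardAc hglob hrep hub hVne hf hinj hset hAs hSA hSB hGhi hGlo hSt hts hps has hcase
    clear f A
    rcases le_or_gt a (t + 1) with hsa | hsa
    · exact arith_small m n t a SA SB Stot Ghi htn.1 htn.2 hmt hm hmn1 haj hsa hgh hA1 hdc hsplit
    · exact arith_large m n t a p SA SB Stot Ghi Glo htn.1 htn.2 hmt hm hmn1 haj hsa hp hap hql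
        hgh hgl hA1 hA2 hsplit

/-- For `1 ≤ m ≤ n`, the least size of a graph with degree set `{m, …, n}` is at
least the least size of a graph with degree set `{1, …, n}`. -/
theorem lq_interval_mono (m n : ℕ) (hm : 0 < m) (hmn : m ≤ n) :
    lq (Finset.Icc 1 n) ≤ lq (Finset.Icc m n) := by
  classical
  have hn1 : 1 ≤ n := le_trans hm hmn
  -- the target set for `Icc m n` is nonempty thanks to the construction `Gc m n`
  have hBne : {q | ∃ (p : ℕ) (G : SimpleGraph (Fin p)) (inst : DecidableRel G.Adj),
      @degreeSet _ _ G inst = Finset.Icc m n ∧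
      (@SimpleGraph.edgeFinset _ G (@SimpleGraph.fintypeEdgeSet _ G _ inst)).card = q}.Nonempty :=
    ⟨_, ⟨n+1, Gc m n, GcDec m n, Gc_degreeSet m n hm hmn, rfl⟩⟩
  have hmem : ∃ (p : ℕ) (G : SimpleGraph (Fin p)) (inst : DecidableRel G.Adj),
      @degreeSet _ _ G inst = Finset.Icc m n ∧
      (@SimpleGraph.edgeFinset _ G (@SimpleGraph.fintypeEdgeSet _ G _ inst)).card
        = lq (Finset.Icc m n) := Nat.sInf_mem hBne
  obtain ⟨p, G, inst, hset, hq⟩ := hmem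
  letI := inst
  -- the number of edges of `Gc 1 n`
  set E1 : ℕ := (@SimpleGraph.edgeFinset _ (Gc 1 n)
    (@SimpleGraph.fintypeEdgeSet _ (Gc 1 n) _ (GcDec 1 n))).card with hE1
  have hup : lq (Finset.Icc 1 n) ≤ E1 :=
    Nat.sInf_le ⟨n+1, Gc 1 n, GcDec 1 n, Gc_degreeSet 1 n le_rfl hn1, rfl⟩
  -- handshake on both graphs
  have hhs1 : ∑ v, (Gc 1 n).degree v = 2 * E1 :=
    SimpleGraph.sum_degrees_eq_twice_card_edges (Gc 1 n)
  have hhs2 : ∑ v, G.degree v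
      = 2 * (@SimpleGraph.edgeFinset _ G (@SimpleGraph.fintypeEdgeSet _ G _ inst)).card :=
    SimpleGraph.sum_degrees_eq_twice_card_edges G
  have hsum1 := Gc_sum_degrees n hn1
  have hlow := sum_deg_ge G m n hm hmn hset
  rw [hhs2, hq] at hlow
  rw [hhs1] at hsum1
  have h2 : E1 ≤ lq (Finset.Icc m n) := by omega
  exact le_trans hup h2
end

section
/- Let m, n be positive integers with m(m+1) < 2⌈n/2⌉. Then the least number of edges of a graph with degree set {m, m+1, ..., n} equals (1/2)(n(n+1)/2 + ⌈n/2⌉). -/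
set_option linter.dupNamespace false
set_option linter.unusedVariables false

open Finset

namespace LQ

open Finset


/-- partial sums of `m-1, m-2, ...` -/
def TT (m x : ℕ) : ℕ := ∑ k ∈ range x, (m - 1 - k)

lemma TT_succ (m x : ℕ) : TT m (x+1) = TT m x + (m - 1 - x) := sum_range_succ _ _

lemma TT_mono (m : ℕ) : Monotone (TT m) := fun a b hab =>
  sum_le_sum_of_subset (range_subset_range.2 hab)

lemma TT_zero (m : ℕ) : TT m 0 = 0 := rfl

lemma two_TT (m : ℕ) : 2 * TT m m = m * (m - 1) := by
  have h1 : TT m m = ∑ k ∈ range m, k := by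
    rw [TT, ← Finset.sum_range_reflect]
    exact Finset.sum_congr rfl fun k hk => by
      rw [mem_range] at hk; omega
  rw [h1, mul_comm]
  exact Finset.sum_range_id_mul_two m

lemma TT_exists (m : ℕ) : ∀ x r, r < TT m x → ∃ u, u < x ∧ TT m u ≤ r ∧ r < TT m (u+1) := by
  intro x
  induction x with
  | zero => intro r hr; simp [TT_zero] at hr
  | succ x ih =>
    intro r hr
    by_cases h : r < TT m x
    · obtain ⟨u, hu1, hu2, hu3⟩ := ih r h
      exact ⟨u, by omega, hu2, hu3⟩
    · exact ⟨x, by omega, by omega, hr⟩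

lemma TT_unique (m : ℕ) {u w r : ℕ} (h1 : TT m u ≤ r) (h2 : r < TT m (u+1))
    (h3 : TT m w ≤ r) (h4 : r < TT m (w+1)) : u = w := by
  rcases lt_trichotomy u w with h | h | h
  · have := TT_mono m (show u + 1 ≤ w by omega); omega
  · exact h
  · have := TT_mono m (show w + 1 ≤ u by omega); omega

/-- `(n+1)/2 - 1`, the special vertex. -/
def av (n : ℕ) : ℕ := (n+1)/2 - 1

/-- start of the removal interval R -/
def rs (n : ℕ) : ℕ := n - av n

/-- base adjacency: half graph minus edges from `av` to `R = [rs, rs + TT m m)`. -/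
def bcond (m n x y : ℕ) : Prop :=
  n ≤ x + y ∧ ¬(x = av n ∧ rs n ≤ y ∧ y < rs n + TT m m)
    ∧ ¬(y = av n ∧ rs n ≤ x ∧ x < rs n + TT m m)

/-- extra adjacency: low vertex `x` to its window `W x`. -/
def econd (m n x y : ℕ) : Prop :=
  x < m ∧ rs n + TT m x ≤ y ∧ y < rs n + TT m (x+1)

instance (m n x y : ℕ) : Decidable (bcond m n x y) := by unfold bcond; infer_instance
instance (m n x y : ℕ) : Decidable (econd m n x y) := by unfold econd; infer_instance

def G (m n : ℕ) : SimpleGraph (Fin (n+1)) where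
  Adj x y := x ≠ y ∧ (bcond m n x.1 y.1 ∨ econd m n x.1 y.1 ∨ econd m n y.1 x.1)
  symm := by
    refine ⟨?_⟩
    intro x y ⟨h1, h2⟩
    refine ⟨h1.symm, ?_⟩
    unfold bcond at *
    rw [add_comm (y.1 : ℕ)]
    tauto
  loopless := ⟨fun x h => h.1 rfl⟩

instance (m n : ℕ) : DecidableRel (G m n).Adj := fun x y =>
  inferInstanceAs (Decidable (x ≠ y ∧ (bcond m n x.1 y.1 ∨ econd m n x.1 y.1 ∨ econd m n y.1 x.1)))

lemma adj_iff (m n : ℕ) (x y : Fin (n+1)) :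
    (G m n).Adj x y ↔ x.1 ≠ y.1 ∧ (bcond m n x.1 y.1 ∨ econd m n x.1 y.1 ∨ econd m n y.1 x.1) := by
  constructor
  · rintro ⟨h1, h2⟩; exact ⟨fun h => h1 (Fin.ext h), h2⟩
  · rintro ⟨h1, h2⟩; exact ⟨fun h => h1 (by rw [h]), h2⟩

/-- degree via a ℕ-predicate -/
lemma deg_eq {N : ℕ} (G : SimpleGraph (Fin N)) [DecidableRel G.Adj] (v : Fin N)
    (p : ℕ → Prop) [DecidablePred p] (hp : ∀ u : Fin N, G.Adj v u ↔ p u.1) :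
    G.degree v = ((range N).filter p).card := by
  classical
  rw [← SimpleGraph.card_neighborFinset_eq_degree, SimpleGraph.neighborFinset_eq_filter,
    card_filter, card_filter]
  simp only [hp]
  exact Fin.sum_univ_eq_sum_range (fun i => if p i then 1 else 0) N


section Degrees

variable {m n : ℕ}

lemma base_facts (hm : 1 ≤ m) (hkey : m * (m+1) < 2 * ((n+1)/2)) :
    TT m m + m + 1 ≤ (n+1)/2 := by
  have h1 : 2 * TT m m = m * (m - 1) := two_TT m
  have h2 : m * (m + 1) = m * (m - 1) + 2 * m := by
    rcases m with _ | k
    · omega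
    · have : (k+1) * (k+1+1) = (k+1) * k + 2 * (k+1) := by ring
      simpa using this
  omega

lemma deg_low (hm : 1 ≤ m) (hkey : m * (m+1) < 2 * ((n+1)/2)) (v : Fin (n+1))
    (hv : v.1 < m) : (G m n).degree v = m := by
  have hT := base_facts hm hkey
  have hTv : TT m (v.1+1) = TT m v.1 + (m-1-v.1) := TT_succ m v.1
  have hTv2 : TT m (v.1+1) ≤ TT m m := TT_mono m (by omega)
  rw [deg_eq (G m n) v
    (fun u => (n - v.1 ≤ u ∧ u ≤ n) ∨ (rs n + TT m v.1 ≤ u ∧ u < rs n + TT m (v.1+1)))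
    (fun u => by
      have hu := u.2
      rw [adj_iff]; unfold bcond econd rs av; omega)]
  have he : (range (n+1)).filter
      (fun u => (n - v.1 ≤ u ∧ u ≤ n) ∨ (rs n + TT m v.1 ≤ u ∧ u < rs n + TT m (v.1+1)))
      = Ico (n - v.1) (n+1) ∪ Ico (rs n + TT m v.1) (rs n + TT m (v.1+1)) := by
    ext u
    simp only [mem_filter, mem_range, mem_union, mem_Ico]
    unfold rs av
    omega
  rw [he, card_union_of_disjoint, Nat.card_Ico, Nat.card_Ico]
  · unfold rs av; omega
  · rw [Finset.disjoint_left]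
    intro a ha ha'
    rw [mem_Ico] at ha ha'
    unfold rs av at ha'
    omega

lemma deg_mid (hm : 1 ≤ m) (hkey : m * (m+1) < 2 * ((n+1)/2)) (v : Fin (n+1))
    (hv : m ≤ v.1) (hv2 : v.1 < av n) : (G m n).degree v = v.1 + 1 := by
  have hT := base_facts hm hkey
  rw [deg_eq (G m n) v (fun u => n - v.1 ≤ u ∧ u ≤ n)
    (fun u => by
      have hu := u.2
      have h1 : TT m u.1 ≤ TT m m ∨ m ≤ u.1 := by
        rcases le_or_gt u.1 m with h | h
        · exact Or.inl (TT_mono m h)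
        · exact Or.inr (by omega)
      rw [adj_iff]; unfold bcond econd rs av at *; omega)]
  have he : (range (n+1)).filter (fun u => n - v.1 ≤ u ∧ u ≤ n) = Ico (n - v.1) (n+1) := by
    ext u; simp only [mem_filter, mem_range, mem_Ico]; omega
  rw [he, Nat.card_Ico]
  unfold av at *; omega

lemma deg_av (hm : 1 ≤ m) (hkey : m * (m+1) < 2 * ((n+1)/2)) (v : Fin (n+1))
    (hv : v.1 = av n) : (G m n).degree v = av n + 1 - TT m m := by
  have hT := base_facts hm hkey
  rw [deg_eq (G m n) v (fun u => rs n + TT m m ≤ u ∧ u ≤ n)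
    (fun u => by
      have hu := u.2
      have h1 : u.1 < m → TT m (u.1+1) ≤ TT m m := fun h => TT_mono m (by omega)
      rw [adj_iff]; unfold bcond econd rs av at *; omega)]
  have he : (range (n+1)).filter (fun u => rs n + TT m m ≤ u ∧ u ≤ n)
      = Ico (rs n + TT m m) (n+1) := by
    ext u; simp only [mem_filter, mem_range, mem_Ico]; omega
  rw [he, Nat.card_Ico]
  unfold rs av at *; omega

lemma deg_high (hm : 1 ≤ m) (hkey : m * (m+1) < 2 * ((n+1)/2)) (v : Fin (n+1))
    (hv : av n < v.1) (hv2 : ¬ (rs n ≤ v.1 ∧ v.1 < rs n + TT m m)) :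
    (G m n).degree v = v.1 := by
  have hT := base_facts hm hkey
  rw [deg_eq (G m n) v (fun u => n - v.1 ≤ u ∧ u ≤ n ∧ u ≠ v.1)
    (fun u => by
      have hu := u.2
      have h1 : u.1 < m → TT m (u.1+1) ≤ TT m m := fun h => TT_mono m (by omega)
      rw [adj_iff]; unfold bcond econd rs av at *; omega)]
  have he : (range (n+1)).filter (fun u => n - v.1 ≤ u ∧ u ≤ n ∧ u ≠ v.1)
      = (Ico (n - v.1) (n+1)).erase v.1 := by
    ext u; simp only [mem_filter, mem_range, mem_Ico, mem_erase]; unfold rs av at *; omega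
  rw [he, card_erase_of_mem, Nat.card_Ico]
  · unfold rs av at *; omega
  · rw [mem_Ico]; unfold rs av at *; omega

lemma deg_R (hm : 1 ≤ m) (hkey : m * (m+1) < 2 * ((n+1)/2)) (v : Fin (n+1))
    (hv : rs n ≤ v.1) (hv2 : v.1 < rs n + TT m m) : (G m n).degree v = v.1 := by
  have hT := base_facts hm hkey
  obtain ⟨x, hx1, hx2, hx3⟩ := TT_exists m m (v.1 - rs n) (by omega)
  have hrs : rs n = n - ((n+1)/2 - 1) := rfl
  have hav : av n = (n+1)/2 - 1 := rfl
  rw [deg_eq (G m n) v (fun u => (n - v.1 ≤ u ∧ u ≤ n ∧ u ≠ av n ∧ u ≠ v.1) ∨ u = x)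
    (fun u => by
      have hu := u.2
      constructor
      · rw [adj_iff]
        rintro ⟨hne, hb | he | he'⟩
        · unfold bcond at hb; left; omega
        · unfold econd at he; omega
        · obtain ⟨hu1, hu2, hu3⟩ := he'
          right
          exact TT_unique m (show TT m u.1 ≤ v.1 - rs n by omega) (by omega) hx2 hx3
      · rintro (⟨h1, h2, h3, h4⟩ | hx)
        · rw [adj_iff]
          refine ⟨by omega, Or.inl ?_⟩
          unfold bcond; omega
        · rw [adj_iff]
          refine ⟨by omega, Or.inr (Or.inr ?_)⟩
          unfold econd
          rw [hx]
          omega)]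
  have he : (range (n+1)).filter (fun u => (n - v.1 ≤ u ∧ u ≤ n ∧ u ≠ av n ∧ u ≠ v.1) ∨ u = x)
      = insert x (((Ico (n - v.1) (n+1)).erase (av n)).erase v.1) := by
    ext u
    simp only [mem_filter, mem_range, mem_Ico, mem_erase, mem_insert]
    omega
  rw [he, card_insert_of_notMem, card_erase_of_mem, card_erase_of_mem, Nat.card_Ico]
  all_goals first
    | omega
    | (simp only [mem_erase, mem_Ico, mem_insert, not_or, not_and]; omega)

end Degrees

section Count

variable {m n : ℕ}

/-- target degree of vertex `i` -/
def w (m n i : ℕ) : ℕ :=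
  if i < m then m else if i < av n then i+1 else if i = av n then av n + 1 - TT m m else i

lemma deg_w (hm : 1 ≤ m) (hkey : m * (m+1) < 2 * ((n+1)/2)) (v : Fin (n+1)) :
    (G m n).degree v = w m n v.1 := by
  have hT := base_facts hm hkey
  unfold w
  by_cases h1 : v.1 < m
  · rw [if_pos h1]; exact deg_low hm hkey v h1
  · rw [if_neg h1]
    by_cases h2 : v.1 < av n
    · rw [if_pos h2]; exact deg_mid hm hkey v (by omega) h2
    · rw [if_neg h2]
      by_cases h3 : v.1 = av n
      · rw [if_pos h3]; exact deg_av hm hkey v h3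
      · rw [if_neg h3]
        by_cases h4 : rs n ≤ v.1 ∧ v.1 < rs n + TT m m
        · exact deg_R hm hkey v h4.1 h4.2
        · exact deg_high hm hkey v (by omega) h4

lemma degSet (hm : 1 ≤ m) (hkey : m * (m+1) < 2 * ((n+1)/2)) :
    degreeSet (G m n) = Finset.Icc m n := by
  have hT := base_facts hm hkey
  have hrs : rs n = n - ((n+1)/2 - 1) := rfl
  have hav : av n = (n+1)/2 - 1 := rfl
  ext d
  simp only [degreeSet, mem_image, mem_univ, true_and, Finset.mem_Icc]
  constructor
  · rintro ⟨v, rfl⟩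
    rw [deg_w hm hkey v]
    have hv := v.2
    unfold w
    split_ifs <;> omega
  · rintro ⟨hd1, hd2⟩
    by_cases h1 : d = m
    · refine ⟨⟨0, by omega⟩, ?_⟩
      rw [deg_w hm hkey]
      unfold w; simp only []
      rw [if_pos (by omega : (0:ℕ) < m)]
      omega
    · by_cases h2 : d ≤ av n
      · refine ⟨⟨d-1, by omega⟩, ?_⟩
        rw [deg_w hm hkey]
        unfold w; simp only []
        rw [if_neg (by omega), if_pos (by omega)]
        omega
      · refine ⟨⟨d, by omega⟩, ?_⟩
        rw [deg_w hm hkey]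
        unfold w; simp only []
        rw [if_neg (by omega), if_neg (by omega), if_neg (by omega)]

lemma mul_pred_add : ∀ k : ℕ, k * (k-1) + k = k * k
  | 0 => rfl
  | (j+1) => by
    have h : (j+1) * j + (j+1) = (j+1) * (j+1) := by ring
    simpa using h

lemma sq_succ_eq (k : ℕ) : (k+1) * k = k * (k-1) + 2 * k := by
  rcases k with _ | j
  · simp
  · have : (j+1+1) * (j+1) = (j+1) * j + 2 * (j+1) := by ring
    simpa using this

lemma sum_Ico_id (a b : ℕ) (hab : a ≤ b) :
    2 * (∑ i ∈ Ico a b, i) + a * (a-1) = b * (b-1) := by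
  have h1 : (∑ i ∈ Ico 0 a, i) + (∑ i ∈ Ico a b, i) = ∑ i ∈ Ico 0 b, i :=
    Finset.sum_Ico_consecutive _ (Nat.zero_le a) hab
  have h2 : ∑ i ∈ Ico 0 a, i = ∑ i ∈ range a, i := by rw [Finset.range_eq_Ico]
  have h3 : ∑ i ∈ Ico 0 b, i = ∑ i ∈ range b, i := by rw [Finset.range_eq_Ico]
  have g1 := Finset.sum_range_id_mul_two a
  have g2 := Finset.sum_range_id_mul_two b
  omega

lemma sum_deg (hm : 1 ≤ m) (hkey : m * (m+1) < 2 * ((n+1)/2)) :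
    ∑ v : Fin (n+1), (G m n).degree v = n*(n+1)/2 + (n+1)/2 := by
  have hT := base_facts hm hkey
  have hav : av n = (n+1)/2 - 1 := rfl
  simp only [deg_w hm hkey]
  rw [Fin.sum_univ_eq_sum_range (fun i => w m n i) (n+1)]
  have hmav : m ≤ av n := by omega
  have c1 : (∑ i ∈ Ico 0 m, w m n i) + (∑ i ∈ Ico m (av n), w m n i)
      = ∑ i ∈ Ico 0 (av n), w m n i :=
    Finset.sum_Ico_consecutive _ (Nat.zero_le m) hmav
  have c2 : (∑ i ∈ Ico 0 (av n), w m n i) + (∑ i ∈ Ico (av n) (av n + 1), w m n i)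
      = ∑ i ∈ Ico 0 (av n + 1), w m n i :=
    Finset.sum_Ico_consecutive _ (Nat.zero_le _) (by omega)
  have c3 : (∑ i ∈ Ico 0 (av n + 1), w m n i) + (∑ i ∈ Ico (av n + 1) (n+1), w m n i)
      = ∑ i ∈ Ico 0 (n+1), w m n i :=
    Finset.sum_Ico_consecutive _ (Nat.zero_le _) (by omega)
  have A1 : ∑ i ∈ Ico 0 m, w m n i = m * m := by
    rw [Finset.sum_congr rfl (fun i hi => (?_ : w m n i = m))]
    · rw [Finset.sum_const, Nat.card_Ico, smul_eq_mul, Nat.sub_zero]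
    · rw [mem_Ico] at hi; unfold w; rw [if_pos (by omega)]
  have A2 : ∑ i ∈ Ico m (av n), w m n i = (∑ i ∈ Ico m (av n), i) + (av n - m) := by
    rw [Finset.sum_congr rfl (fun i hi => (?_ : w m n i = i + 1))]
    · rw [Finset.sum_add_distrib, Finset.sum_const, Nat.card_Ico, smul_eq_mul, mul_one]
    · rw [mem_Ico] at hi; unfold w; rw [if_neg (by omega), if_pos (by omega)]
  have A3 : ∑ i ∈ Ico (av n) (av n + 1), w m n i = av n + 1 - TT m m := by
    rw [Nat.Ico_succ_singleton, Finset.sum_singleton]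
    unfold w
    rw [if_neg (by omega), if_neg (by omega), if_pos rfl]
  have A4 : ∑ i ∈ Ico (av n + 1) (n+1), w m n i = ∑ i ∈ Ico (av n + 1) (n+1), i := by
    refine Finset.sum_congr rfl (fun i hi => ?_)
    rw [mem_Ico] at hi; unfold w
    rw [if_neg (by omega), if_neg (by omega), if_neg (by omega)]
  have G1 := sum_Ico_id m (av n) hmav
  have G2 := sum_Ico_id (av n + 1) (n+1) (by omega)
  have P0 : m * (m+1) = m * m + m := by ring
  have P1 : m * (m-1) + m = m * m := mul_pred_add m
  have P2 : (av n + 1) * (av n) = av n * (av n - 1) + 2 * av n := sq_succ_eq (av n)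
  have P2' : (av n + 1) * (av n + 1 - 1) = (av n + 1) * av n := by rw [Nat.add_sub_cancel]
  have P3 : (n+1) * ((n+1) - 1) = n * (n+1) := by rw [Nat.add_sub_cancel]; ring
  have P4 : 2 * TT m m = m * (m-1) := two_TT m
  rw [Finset.range_eq_Ico, ← c3, ← c2, ← c1, A1, A2, A3, A4]
  omega
end Count

section Lower

lemma key_ineq {V : Type} [Fintype V] [DecidableEq V] (G : SimpleGraph V) [DecidableRel G.Adj]
    (A : Finset V) :
    ∑ v ∈ A, G.degree v ≤ A.card * (A.card - 1) + ∑ v ∈ Aᶜ, G.degree v := by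
  classical
  have hdeg : ∀ v, G.degree v = (univ.filter (G.Adj v)).card := fun v => by
    rw [← SimpleGraph.card_neighborFinset_eq_degree, SimpleGraph.neighborFinset_eq_filter]
  have hsplit : ∀ v, (univ.filter (G.Adj v)).card
      = (A.filter (G.Adj v)).card + (Aᶜ.filter (G.Adj v)).card := by
    intro v
    rw [← card_union_of_disjoint (disjoint_filter_filter disjoint_compl_right)]
    congr 1
    rw [← filter_union, union_compl]
  have h1 : ∀ v ∈ A, (A.filter (G.Adj v)).card ≤ A.card - 1 := by
    intro v hv
    have hsub : A.filter (G.Adj v) ⊆ A.erase v := by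
      intro u hu
      rw [mem_filter] at hu
      exact mem_erase.2 ⟨fun h => (G.ne_of_adj hu.2) (h ▸ rfl), hu.1⟩
    calc (A.filter (G.Adj v)).card ≤ (A.erase v).card := card_le_card hsub
      _ = A.card - 1 := card_erase_of_mem hv
  have h2 : ∑ v ∈ A, (Aᶜ.filter (G.Adj v)).card ≤ ∑ u ∈ Aᶜ, G.degree u := by
    have e1 : ∑ v ∈ A, (Aᶜ.filter (G.Adj v)).card
        = ∑ u ∈ Aᶜ, (A.filter (fun v => G.Adj u v)).card := by
      simp only [card_filter]
      rw [Finset.sum_comm]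
      refine Finset.sum_congr rfl fun u hu => Finset.sum_congr rfl fun v hv => ?_
      simp [SimpleGraph.adj_comm]
    rw [e1]
    refine Finset.sum_le_sum fun u hu => ?_
    rw [hdeg]
    exact card_le_card (filter_subset_filter _ (subset_univ A))
  calc ∑ v ∈ A, G.degree v
      = ∑ v ∈ A, ((A.filter (G.Adj v)).card + (Aᶜ.filter (G.Adj v)).card) := by
        exact Finset.sum_congr rfl fun v hv => by rw [hdeg, hsplit]
    _ = ∑ v ∈ A, (A.filter (G.Adj v)).card + ∑ v ∈ A, (Aᶜ.filter (G.Adj v)).card :=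
        Finset.sum_add_distrib
    _ ≤ ∑ v ∈ A, (A.card - 1) + ∑ u ∈ Aᶜ, G.degree u :=
        Nat.add_le_add (Finset.sum_le_sum h1) h2
    _ = A.card * (A.card - 1) + ∑ u ∈ Aᶜ, G.degree u := by
        rw [Finset.sum_const, smul_eq_mul]

lemma lower_bound {m n : ℕ} (hm : 1 ≤ m) (hkey : m * (m+1) < 2 * ((n+1)/2))
    {p : ℕ} (G' : SimpleGraph (Fin p)) [inst : DecidableRel G'.Adj]
    (hdeg : degreeSet G' = Finset.Icc m n) :
    n*(n+1)/2 + (n+1)/2 ≤ ∑ v, G'.degree v := by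
  have hT := base_facts hm hkey
  set hh := (n+1)/2 with hhdef
  have hmh : m < hh := by omega
  have hn3 : 3 ≤ n := by omega
  have hex : ∀ d ∈ Finset.Icc hh n, ∃ v : Fin p, G'.degree v = d := by
    intro d hd
    rw [Finset.mem_Icc] at hd
    have hmem : d ∈ @degreeSet _ _ G' inst := by
      rw [hdeg, Finset.mem_Icc]; omega
    simpa [degreeSet, Finset.mem_image] using hmem
  choose f hf using hex
  have hp0 : 0 < p := by
    have : m ∈ @degreeSet _ _ G' inst := by rw [hdeg, Finset.mem_Icc]; omega
    simp only [degreeSet, Finset.mem_image, Finset.mem_univ, true_and] at this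
    obtain ⟨v, -⟩ := this
    exact v.pos
  have v0 : Fin p := ⟨0, hp0⟩
  set g : ℕ → Fin p := fun d => if h : d ∈ Finset.Icc hh n then f d h else v0 with hg
  have hgd : ∀ d ∈ Finset.Icc hh n, G'.degree (g d) = d := by
    intro d hd
    show G'.degree (if h : d ∈ Finset.Icc hh n then f d h else v0) = d
    rw [dif_pos hd]
    exact hf d hd
  set A : Finset (Fin p) := (Finset.Icc hh n).image g with hA
  have hinj : Set.InjOn g (Finset.Icc hh n) := by
    intro x hx y hy hxy
    have e1 := hgd x hx
    have e2 := hgd y hy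
    rw [← e1, ← e2, hxy]
  have hcard : A.card = n + 1 - hh := by
    rw [hA, card_image_of_injOn hinj, Nat.card_Icc]
  have hsumA : ∑ v ∈ A, G'.degree v = ∑ d ∈ Finset.Icc hh n, d := by
    rw [hA, Finset.sum_image (fun x hx y hy => hinj hx hy)]
    exact Finset.sum_congr rfl hgd
  have hk := key_ineq G' A
  have htot : ∑ v ∈ A, G'.degree v + ∑ v ∈ Aᶜ, G'.degree v = ∑ v, G'.degree v :=
    Finset.sum_add_sum_compl A _
  have hgauss : 2 * (∑ d ∈ Finset.Icc hh n, d) + hh * (hh - 1) = (n+1) * n := by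
    have h1 : Finset.Icc hh n = Finset.Ico hh (n+1) := by rw [Finset.Ico_add_one_right_eq_Icc]
    have h2 := sum_Ico_id hh (n+1) (by omega)
    have h3 : (n+1) * ((n+1) - 1) = (n+1) * n := by rw [Nat.add_sub_cancel]
    rw [h1]
    omega
  rw [hcard] at hk
  rw [hsumA] at hk htot
  set X := ∑ d ∈ Finset.Icc hh n, d with hX
  set D := ∑ v, G'.degree v with hD
  set Y := ∑ v ∈ Aᶜ, G'.degree v with hY
  -- now pure arithmetic
  rcases Nat.even_or_odd n with ⟨k, hk2⟩ | ⟨k, hk2⟩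
  · have hhk : hh = k := by omega
    have hc : n + 1 - hh = k + 1 := by omega
    rw [hc] at hk
    rw [hhk] at hgauss
    have q1 : (k+1) * (k+1-1) = k*k + k := by rw [Nat.add_sub_cancel]; ring
    have q2 : k * (k-1) + k = k * k := mul_pred_add k
    have q3 : (n+1) * n = 4*(k*k) + 2*k := by rw [hk2]; ring
    have q4 : n * (n+1) = 4*(k*k) + 2*k := by rw [hk2]; ring
    omega
  · have hhk : hh = k + 1 := by omega
    have hc : n + 1 - hh = k + 1 := by omega
    rw [hc] at hk
    rw [hhk] at hgauss
    have q1 : (k+1) * (k+1-1) = k*k + k := by rw [Nat.add_sub_cancel]; ring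
    have q3 : (n+1) * n = 4*(k*k) + 6*k + 2 := by rw [hk2]; ring
    have q4 : n * (n+1) = 4*(k*k) + 6*k + 2 := by rw [hk2]; ring
    omega

end Lower

section Final

lemma edges_eq {m n : ℕ} (hm : 1 ≤ m) (hkey : m * (m+1) < 2 * ((n+1)/2)) :
    2 * (G m n).edgeFinset.card = n*(n+1)/2 + (n+1)/2 := by
  rw [← SimpleGraph.sum_degrees_eq_twice_card_edges]
  exact sum_deg hm hkey

lemma card_edgeFinset_congr {V : Type} [Fintype V] (G : SimpleGraph V)
    (i1 i2 : Fintype G.edgeSet) :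
    (@SimpleGraph.edgeFinset _ G i1).card = (@SimpleGraph.edgeFinset _ G i2).card := by
  have : i1 = i2 := Subsingleton.elim i1 i2
  rw [this]

end Final
end LQ


/-- If `m(m+1) < 2⌈n/2⌉` then the least size of a graph with degree set
`{m, …, n}` equals `(1/2)(n(n+1)/2 + ⌈n/2⌉)`. -/
theorem lq_interval_small_m (m n : ℕ) (hm : 0 < m) (hn : 0 < n)
    (h : m * (m + 1) < 2 * ((n + 1) / 2)) :
    2 * lq (Finset.Icc m n) = n * (n + 1) / 2 + (n + 1) / 2 := by
  classical
  unfold lq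
  set Q : Set ℕ := {q | ∃ (p : ℕ) (G : SimpleGraph (Fin p)) (inst : DecidableRel G.Adj),
    @degreeSet _ _ G inst = Finset.Icc m n ∧
    (@SimpleGraph.edgeFinset _ G (@SimpleGraph.fintypeEdgeSet _ G _ inst)).card = q} with hQ
  set E : ℕ := (@SimpleGraph.edgeFinset _ (LQ.G m n)
      (@SimpleGraph.fintypeEdgeSet _ (LQ.G m n) _ inferInstance)).card with hE
  have hmem : E ∈ Q := ⟨n+1, LQ.G m n, inferInstance, LQ.degSet hm h, rfl⟩
  have hEeq : 2 * E = n * (n + 1) / 2 + (n + 1) / 2 := by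
    rw [hE, LQ.card_edgeFinset_congr (LQ.G m n) _ _]
    exact LQ.edges_eq hm h
  have hlow : ∀ q ∈ Q, E ≤ q := by
    rintro q ⟨p, G', inst, hdg, rfl⟩
    letI := inst
    have h1 := LQ.lower_bound hm h G' hdg
    have h2 : ∑ v, G'.degree v = 2 * G'.edgeFinset.card :=
      SimpleGraph.sum_degrees_eq_twice_card_edges G'
    rw [LQ.card_edgeFinset_congr G' (@SimpleGraph.fintypeEdgeSet _ G' _ inst) _]
    omega
  have key : sInf Q = E := le_antisymm (Nat.sInf_le hmem) (le_csInf ⟨E, hmem⟩ hlow)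
  rw [key, hEeq]
end

section
/- Let D = {d_1 > d_2 > ... > d_n} be a set of positive integers such that d_n divides d_i for every i. Then the least number of edges of a graph with degree set D is achieved by a graph whose degree sequence contains exactly one copy of each d_i for i < n; that is, ℓ_q(D) = (1/2)(σ(D) + C*·d_n) where σ(D) = d_1 + ... + d_n and C* is the least nonnegative integer C such that the sequence d_1, ..., d_{n-1}, followed by C+1 copies of d_n, is graphic. -/
/-- A list of natural numbers is graphic if it is the degree sequence of a
finite simple graph. -/
def IsGraphic (s : List ℕ) : Prop :=
  ∃ (G : SimpleGraph (Fin s.length)) (inst : DecidableRel G.Adj),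
    ∀ i : Fin s.length, @SimpleGraph.degree _ G i (SimpleGraph.neighborSetFintype G i) = s.get i

/-- The sequence `d 1, …, d (n-1)` followed by `C + 1` copies of `d n`. -/
def seqD (n : ℕ) (d : ℕ → ℕ) (C : ℕ) : List ℕ :=
  (List.range (n - 1)).map (fun i => d (i + 1)) ++ List.replicate (C + 1) (d n)

lemma exists_perm_map {α β : Type*} [DecidableEq α] (f : α → β) :
    ∀ (s : List β) (l : List α), (l.map f).Perm s → ∃ l' : List α, l'.Perm l ∧ l'.map f = s := by
  intro s
  induction s with
  | nil =>
    intro l h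
    have : l = [] := by simpa using List.Perm.nil_eq h.symm
    exact ⟨[], by simp [this]⟩
  | cons a s ih =>
    intro l h
    have ha : a ∈ l.map f := h.symm.subset List.mem_cons_self
    obtain ⟨v, hv, hfv⟩ := List.mem_map.mp ha
    have hperm : l.Perm (v :: l.erase v) := List.perm_cons_erase hv
    have h2 : (f v :: (l.erase v).map f).Perm (a :: s) := (hperm.map f).symm.trans h
    rw [hfv] at h2
    have h3 : ((l.erase v).map f).Perm s := h2.cons_inv
    obtain ⟨l'', h4, h5⟩ := ih (l.erase v) h3
    exact ⟨v :: l'', (h4.cons v).trans hperm.symm, by simp [h5, hfv]⟩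

lemma isGraphic_of_multiset {V : Type} [Fintype V] [DecidableEq V]
    (G : SimpleGraph V) [DecidableRel G.Adj] (s : List ℕ)
    (h : Finset.univ.val.map (fun v => G.degree v) = (s : Multiset ℕ)) : IsGraphic s := by
  classical
  set lV := (Finset.univ (α := V)).val.toList with hlV
  have hcoe : (lV : Multiset V) = Finset.univ.val := Multiset.coe_toList _
  have hnodupV : lV.Nodup := by
    have := Finset.univ.nodup (α := V)
    rwa [← hcoe, Multiset.coe_nodup] at this
  have hperm : (lV.map (fun v => G.degree v)).Perm s := by
    rw [← Multiset.coe_eq_coe, ← Multiset.map_coe, hcoe, h]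
  obtain ⟨l', hl'perm, hl'map⟩ := exists_perm_map (fun v => G.degree v) s lV hperm
  have hnodup : l'.Nodup := hl'perm.nodup_iff.mpr hnodupV
  have hlen : l'.length = s.length := by rw [← hl'map, List.length_map]
  have hcard : l'.length = Fintype.card V := by
    rw [hl'perm.length_eq, hlV, Multiset.length_toList]
    rfl
  set fn : Fin s.length → V := fun i => l'.get (Fin.cast hlen.symm i) with hfn
  have hinj : Function.Injective fn := by
    intro i j hij
    have := List.nodup_iff_injective_get.mp hnodup hij
    simpa [Fin.ext_iff] using this
  have hbij : Function.Bijective fn :=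
    (Fintype.bijective_iff_injective_and_card fn).mpr ⟨hinj, by simp [← hcard, hlen]⟩
  set e := Equiv.ofBijective fn hbij with he
  refine ⟨G.comap e, fun a b => inferInstanceAs (Decidable (G.Adj _ _)), fun i => ?_⟩
  have hdeg : ∀ (instF : Fintype ((G.comap e).neighborSet i)),
      @SimpleGraph.degree _ (G.comap e) i instF = G.degree (e i) := by
    intro instF
    rw [← SimpleGraph.card_neighborSet_eq_degree, ← SimpleGraph.card_neighborSet_eq_degree]
    exact Fintype.card_congr (Equiv.subtypeEquiv e (by intro v; simp [SimpleGraph.comap]))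
  rw [hdeg]
  subst hl'map
  show G.degree (l'.get (Fin.cast hlen.symm i)) = _
  simp

lemma div_block_iff {b a : ℕ} (hb : 0 < b) (i : ℕ) :
    i / b = a ↔ a * b ≤ i ∧ i < a * b + b := by
  constructor
  · intro h
    have h1 := Nat.div_add_mod i b
    have h2 := Nat.mod_lt i hb
    rw [h, Nat.mul_comm] at h1
    set ab := a * b with hab
    omega
  · rintro ⟨h3, h4⟩
    have h5 : a ≤ i / b := (Nat.le_div_iff_mul_le hb).mpr h3
    have h6 : i / b < a + 1 := (Nat.div_lt_iff_lt_mul hb).mpr (by rw [Nat.add_mul]; omega)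
    omega

lemma card_filter_div {Nv b a kk : ℕ} (hb : 0 < b) (hN : Nv = kk * b) (ha : a < kk) :
    (Finset.univ.filter (fun i : Fin Nv => (i : ℕ) / b = a)).card = b := by
  have hle : a * b + b ≤ Nv := by
    rw [hN]
    calc a * b + b = (a + 1) * b := by ring
    _ ≤ kk * b := Nat.mul_le_mul_right b ha
  have : (Finset.univ.filter (fun i : Fin Nv => (i : ℕ) / b = a)).card
      = (Finset.Ico (a * b) (a * b + b)).card := by
    refine Finset.card_bij' (fun i _ => (i : ℕ)) (fun t ht => ⟨t, ?_⟩) ?_ ?_ ?_ ?_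
    · have := Finset.mem_Ico.mp ht
      omega
    · intro i hi
      rw [Finset.mem_filter] at hi
      rw [Finset.mem_Ico]
      exact ((div_block_iff hb _).mp hi.2).imp id id
    · intro t ht
      rw [Finset.mem_filter]
      refine ⟨Finset.mem_univ _, ?_⟩
      have := Finset.mem_Ico.mp ht
      exact (div_block_iff hb _).mpr ⟨this.1, this.2⟩
    · intro i hi; rfl
    · intro t ht; rfl
  rw [this, Nat.card_Ico]
  omega

open Finset in
lemma isGraphic_split {V : Type} [Fintype V] [DecidableEq V]
    (G : SimpleGraph V) [DecidableRel G.Adj]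
    (m : ℕ) (hm : 0 < m) (K : V → Prop) [DecidablePred K]
    (hdpos : ∀ v, 0 < G.degree v)
    (hd : ∀ v, ¬ K v → m ∣ G.degree v) (s : List ℕ)
    (hs : (s : Multiset ℕ) =
      (Finset.univ.filter K).val.map (fun v => G.degree v)
      + Multiset.replicate (∑ v ∈ Finset.univ.filter (fun v => ¬ K v), G.degree v / m) m) :
    IsGraphic s := by
  classical
  set b : V → ℕ := fun v => if K v then G.degree v else m with hb
  set k : V → ℕ := fun v => if K v then 1 else G.degree v / m with hk
  have hkb : ∀ v, G.degree v = k v * b v := by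
    intro v
    by_cases h : K v <;> simp [hk, hb, h]
    exact (Nat.div_mul_cancel (hd v h)).symm
  have hbpos : ∀ v, 0 < b v := by
    intro v
    by_cases h : K v <;> simp [hb, h, hdpos v, hm]
  -- neighbor indexing
  let eV : ∀ v : V, G.neighborSet v ≃ Fin (G.degree v) :=
    fun v => Fintype.equivFinOfCardEq (G.card_neighborSet_eq_degree v)
  let idx : ∀ {v u : V}, G.Adj v u → ℕ :=
    fun {v u} h => (eV v ⟨u, (G.mem_neighborSet v u).mpr h⟩ : Fin _).val
  have hidx_pi : ∀ {v u : V} (h h' : G.Adj v u), idx h = idx h' := fun _ _ => rfl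
  have hidx_lt : ∀ {v u : V} (h : G.Adj v u), idx h < G.degree v :=
    fun h => (eV _ _).isLt
  have hidx_inj : ∀ {v u u' : V} (h : G.Adj v u) (h' : G.Adj v u'),
      idx h = idx h' → u = u' := by
    intro v u u' h h' heq
    have := (eV v).injective (Fin.ext heq)
    exact congrArg Subtype.val this
  have hidx_surj : ∀ (v : V) (i : Fin (G.degree v)), ∃ u, ∃ h : G.Adj v u, idx h = i.val := by
    intro v i
    refine ⟨((eV v).symm i : G.neighborSet v).1,
      (G.mem_neighborSet v _).mp ((eV v).symm i).2, ?_⟩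
    show ((eV v) ⟨((eV v).symm i).1, _⟩ : Fin _).val = _
    rw [show (⟨((eV v).symm i).1, _⟩ : G.neighborSet v) = (eV v).symm i from rfl]
    rw [Equiv.apply_symm_apply]
  set W := Σ v : V, Fin (k v) with hW
  let H : SimpleGraph W := {
    Adj := fun x y => ∃ h : G.Adj x.1 y.1,
      idx h / b x.1 = (x.2 : ℕ) ∧ idx h.symm / b y.1 = (y.2 : ℕ)
    symm := by
      constructor
      rintro ⟨v, a0⟩ ⟨u, c⟩ ⟨h, h1, h2⟩
      exact ⟨h.symm, h2, h1⟩
    loopless := by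
      constructor
      rintro ⟨v, a0⟩ ⟨h, -, -⟩
      exact G.loopless.irrefl v h }
  letI instH : DecidableRel H.Adj := Classical.decRel _
  have hdegH : ∀ (x : W), H.degree x = b x.1 := by
    rintro ⟨v, a0⟩
    rw [← SimpleGraph.card_neighborSet_eq_degree]
    have hchoose : ∀ y : H.neighborSet ⟨v, a0⟩, ∃ h : G.Adj v (y.1).1,
        idx h / b v = (a0 : ℕ) ∧ idx h.symm / b (y.1).1 = ((y.1).2 : ℕ) :=
      fun y => (H.mem_neighborSet _ _).mp (Subtype.prop y)
    let F : H.neighborSet ⟨v, a0⟩ → {i : Fin (G.degree v) // (i : ℕ) / b v = (a0 : ℕ)} :=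
      fun y => ⟨⟨idx (hchoose y).choose, hidx_lt (hchoose y).choose⟩, (hchoose y).choose_spec.1⟩
    have hAdjIntro : ∀ (u : V) (c : Fin (k u)) (h : G.Adj v u),
        idx h / b v = (a0 : ℕ) → idx h.symm / b u = (c : ℕ) → H.Adj ⟨v, a0⟩ ⟨u, c⟩ :=
      fun u c h h1 h2 => ⟨h, h1, h2⟩
    have hFbij : Function.Bijective F := by
      constructor
      · intro y y' heq
        have hval : idx (hchoose y).choose = idx (hchoose y').choose := by
          have := congrArg (fun z => ((z : {i : Fin (G.degree v) // (i : ℕ) / b v = (a0 : ℕ)}).1 : ℕ)) heq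
          simpa [F] using this
        have huu : (y.1).1 = (y'.1).1 := hidx_inj (hchoose y).choose (hchoose y').choose hval
        have e1 := (hchoose y).choose_spec.2
        have e2 := (hchoose y').choose_spec.2
        apply Subtype.ext
        apply Sigma.ext huu
        obtain ⟨⟨u, c⟩, hy⟩ := y
        obtain ⟨⟨u', c'⟩, hy'⟩ := y'
        dsimp at huu
        subst huu
        simp only [heq_eq_eq]
        apply Fin.ext
        dsimp at e1 e2 ⊢
        rw [← e1, ← e2]
      · rintro ⟨i, hi⟩
        obtain ⟨u, h, hidx_eq⟩ := hidx_surj v i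
        have hlt : idx h.symm / b u < k u := by
          rw [Nat.div_lt_iff_lt_mul (hbpos u), ← hkb u]
          exact hidx_lt h.symm
        have hmem : (⟨u, ⟨idx h.symm / b u, hlt⟩⟩ : W) ∈ H.neighborSet ⟨v, a0⟩ :=
          (H.mem_neighborSet _ _).mpr
            (hAdjIntro u ⟨idx h.symm / b u, hlt⟩ h (by rw [hidx_eq]; exact hi) rfl)
        refine ⟨⟨⟨u, ⟨idx h.symm / b u, hlt⟩⟩, hmem⟩, ?_⟩
        apply Subtype.ext
        apply Fin.ext
        show idx (hchoose ⟨⟨u, ⟨idx h.symm / b u, hlt⟩⟩, hmem⟩).choose = (i : ℕ)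
        rw [hidx_pi (hchoose ⟨⟨u, ⟨idx h.symm / b u, hlt⟩⟩, hmem⟩).choose h, hidx_eq]
    rw [Fintype.card_congr (Equiv.ofBijective F hFbij), Fintype.card_subtype]
    exact card_filter_div (hbpos v) (hkb v) a0.isLt
  -- now the multiset of degrees
  apply isGraphic_of_multiset H s
  have huniv : (Finset.univ (α := W)).val
      = (Finset.univ (α := V)).val.bind (fun v => (Finset.univ (α := Fin (k v))).val.map (Sigma.mk v)) := by
    rw [← Finset.univ_sigma_univ]
    rfl
  rw [huniv, Multiset.map_bind]
  have hcong : ∀ v ∈ (Finset.univ (α := V)).val,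
      ((Finset.univ (α := Fin (k v))).val.map (Sigma.mk v)).map (fun w => H.degree w)
        = Multiset.replicate (k v) (b v) := by
    intro v _
    rw [Multiset.map_map]
    have : ((fun w => H.degree w) ∘ Sigma.mk v) = fun _ : Fin (k v) => b v := by
      funext a; exact hdegH ⟨v, a⟩
    rw [this, Multiset.map_const']
    simp
  rw [Multiset.bind_congr hcong]
  rw [show (Finset.univ (α := V)).val
      = Multiset.filter K (Finset.univ (α := V)).val
        + Multiset.filter (fun v => ¬ K v) (Finset.univ (α := V)).val from
      (Multiset.filter_add_not K _).symm]
  rw [Multiset.add_bind, hs]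
  congr 1
  · have hrepl : ∀ v ∈ Multiset.filter K (Finset.univ (α := V)).val,
        Multiset.replicate (k v) (b v) = {G.degree v} := by
      intro v hv
      have hKv : K v := (Multiset.mem_filter.mp hv).2
      simp [hk, hb, hKv]
    rw [Multiset.bind_congr hrepl, Multiset.bind_singleton, Finset.filter_val]
  · apply Multiset.eq_replicate.mpr
    constructor
    · rw [Multiset.card_bind]
      rw [show (∑ v ∈ Finset.univ.filter (fun v => ¬ K v), G.degree v / m)
          = ((Finset.univ.filter (fun v => ¬ K v)).val.map (fun v => G.degree v / m)).sum from rfl]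
      congr 1
      apply Multiset.map_congr rfl
      intro v hv
      have hKv : ¬ K v := (Multiset.mem_filter.mp hv).2
      simp [Function.comp, hk, hKv]
    · intro x hx
      rw [Multiset.mem_bind] at hx
      obtain ⟨v, hv, hxv⟩ := hx
      have hKv : ¬ K v := (Multiset.mem_filter.mp hv).2
      rw [Multiset.eq_of_mem_replicate hxv]
      simp [hb, hKv]

lemma seqD_coe (n : ℕ) (d : ℕ → ℕ) (C : ℕ) : ((seqD n d C : List ℕ) : Multiset ℕ)
    = Multiset.map (fun i => d (i+1)) (↑(List.range (n-1)) : Multiset ℕ)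
      + Multiset.replicate (C+1) (d n) := by
  simp [seqD, ← Multiset.coe_replicate, Multiset.map_coe, List.replicate_succ]

lemma seqD_sum (n : ℕ) (hn : 0 < n) (d : ℕ → ℕ) (C : ℕ) :
    (seqD n d C).sum = (∑ i ∈ Finset.Icc 1 n, d i) + C * d n := by
  have h1 : ((List.range (n-1)).map (fun i => d (i+1))).sum
      = ∑ i ∈ Finset.range (n-1), d (i+1) := rfl
  have h2 : (Finset.range (n-1)).image (· + 1) = Finset.Icc 1 (n-1) := by
    ext x
    simp only [Finset.mem_image, Finset.mem_range, Finset.mem_Icc]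
    constructor
    · rintro ⟨i, hi, rfl⟩; omega
    · intro h; exact ⟨x - 1, by omega, by omega⟩
  have h3 : ∑ i ∈ Finset.range (n-1), d (i+1) = ∑ i ∈ Finset.Icc 1 (n-1), d i := by
    rw [← h2, Finset.sum_image (by intro a _ b _ h; simp only at h; omega)]
  have h4 : ∑ i ∈ Finset.Icc 1 n, d i = ∑ i ∈ Finset.Icc 1 (n-1), d i + d n := by
    conv_lhs => rw [show n = (n-1)+1 from by omega]
    rw [Finset.sum_Icc_succ_top (by omega)]
    congr 1
    exact congrArg d (by omega)
  rw [seqD, List.sum_append, h1, h3, List.sum_replicate, smul_eq_mul, h4]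
  ring

lemma mem_seqD (n : ℕ) (hn : 0 < n) (d : ℕ → ℕ) (C : ℕ) (x : ℕ) :
    x ∈ seqD n d C ↔ ∃ i ∈ Finset.Icc 1 n, d i = x := by
  rw [seqD, List.mem_append, List.mem_map, List.mem_replicate]
  constructor
  · rintro (⟨j, hj, rfl⟩ | ⟨-, rfl⟩)
    · rw [List.mem_range] at hj
      exact ⟨j + 1, Finset.mem_Icc.mpr (by omega), rfl⟩
    · exact ⟨n, Finset.mem_Icc.mpr (by omega), rfl⟩
  · rintro ⟨i, hi, rfl⟩
    rw [Finset.mem_Icc] at hi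
    by_cases hin : i = n
    · subst hin; exact Or.inr ⟨by omega, rfl⟩
    · refine Or.inl ⟨i - 1, List.mem_range.mpr (by omega), congrArg d (by omega)⟩

/-- From a witness of `IsGraphic (seqD n d C)` we get a member of the `lq` set. -/
lemma bridgeA (n : ℕ) (hn : 0 < n) (d : ℕ → ℕ) (C : ℕ)
    (hC : IsGraphic (seqD n d C)) :
    ∃ q, q ∈ {q | ∃ (p : ℕ) (G : SimpleGraph (Fin p)) (inst : DecidableRel G.Adj),
        @degreeSet _ _ G inst = (Finset.Icc 1 n).image d ∧
        (@SimpleGraph.edgeFinset _ G (@SimpleGraph.fintypeEdgeSet _ G _ inst)).card = q}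
      ∧ 2 * q = (∑ i ∈ Finset.Icc 1 n, d i) + C * d n := by
  classical
  set s := seqD n d C with hs
  obtain ⟨G, instG, hdeg⟩ := hC
  letI := instG
  refine ⟨G.edgeFinset.card, ⟨s.length, G, instG, ?_, rfl⟩, ?_⟩
  · ext x
    rw [show @degreeSet _ _ G instG = Finset.univ.image (fun v => G.degree v) from rfl]
    rw [Finset.mem_image, Finset.mem_image]
    constructor
    · rintro ⟨i, -, rfl⟩
      rw [hdeg i]
      have hmem : s.get i ∈ s := s.get_mem i
      obtain ⟨j, hj, he⟩ := (mem_seqD n hn d C _).mp hmem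
      exact ⟨j, hj, he⟩
    · rintro ⟨j, hj, rfl⟩
      have hmem : d j ∈ s := (mem_seqD n hn d C _).mpr ⟨j, hj, rfl⟩
      obtain ⟨i, hi⟩ := List.mem_iff_get.mp hmem
      exact ⟨i, Finset.mem_univ i, by rw [hdeg i, hi]⟩
  · have hhand : ∑ v, G.degree v = 2 * G.edgeFinset.card :=
      G.sum_degrees_eq_twice_card_edges
    have hsum : ∑ v, G.degree v = s.sum := by
      rw [show s.sum = ∑ i : Fin s.length, s.get i by
        simpa using (List.sum_ofFn s.get).trans (by rw [List.ofFn_get])]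
      exact Finset.sum_congr rfl (fun i _ => hdeg i)
    rw [← hhand, hsum, hs, seqD_sum n hn d C]

lemma icc_range_map (d : ℕ → ℕ) (k : ℕ) :
    Multiset.map (fun i => d i) (Finset.Icc 1 k).val
      = Multiset.map (fun i => d (i+1)) (↑(List.range k) : Multiset ℕ) := by
  have h2 : (Finset.range k).image (· + 1) = Finset.Icc 1 k := by
    ext x
    simp only [Finset.mem_image, Finset.mem_range, Finset.mem_Icc]
    constructor
    · rintro ⟨i, hi, rfl⟩; omega
    · intro h; exact ⟨x - 1, by omega, by omega⟩
  rw [← h2, Finset.image_val_of_injOn (by intro a _ b _ h; simp only at h; omega), Multiset.map_map]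
  rfl

lemma bridgeB (n : ℕ) (hn : 0 < n) (d : ℕ → ℕ)
    (hanti : ∀ i j, 1 ≤ i → i < j → j ≤ n → d j < d i)
    (hpos : ∀ i ∈ Finset.Icc 1 n, 0 < d i)
    (hdvd : ∀ i ∈ Finset.Icc 1 n, d n ∣ d i)
    (q : ℕ)
    (hq : q ∈ {q | ∃ (p : ℕ) (G : SimpleGraph (Fin p)) (inst : DecidableRel G.Adj),
        @degreeSet _ _ G inst = (Finset.Icc 1 n).image d ∧
        (@SimpleGraph.edgeFinset _ G (@SimpleGraph.fintypeEdgeSet _ G _ inst)).card = q}) :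
    ∃ C, IsGraphic (seqD n d C) ∧ 2 * q = (∑ i ∈ Finset.Icc 1 n, d i) + C * d n := by
  classical
  obtain ⟨p, G, instG, hset, hcard⟩ := hq
  letI := instG
  set D := (Finset.Icc 1 n).image d with hD
  have hnIcc : n ∈ Finset.Icc 1 n := Finset.mem_Icc.mpr ⟨hn, le_refl n⟩
  have hdn : 0 < d n := hpos n hnIcc
  have hdegD : ∀ v : Fin p, G.degree v ∈ D := by
    intro v
    rw [← hset]
    exact Finset.mem_image_of_mem _ (Finset.mem_univ v)
  have hDpos : ∀ x ∈ D, 0 < x := by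
    rintro x hx
    obtain ⟨i, hi, rfl⟩ := Finset.mem_image.mp hx
    exact hpos i hi
  have hDdvd : ∀ x ∈ D, d n ∣ x := by
    rintro x hx
    obtain ⟨i, hi, rfl⟩ := Finset.mem_image.mp hx
    exact hdvd i hi
  have hdpos : ∀ v, 0 < G.degree v := fun v => hDpos _ (hdegD v)
  have hp : 0 < p := by
    by_contra hp0
    have : d n ∈ D := Finset.mem_image_of_mem d hnIcc
    rw [← hset] at this
    obtain ⟨v, -, -⟩ := Finset.mem_image.mp this
    exact absurd v.2 (by omega)
  have hrep' : ∀ i : ℕ, ∃ v : Fin p, i ∈ Finset.Icc 1 n → G.degree v = d i := by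
    intro i
    by_cases hi : i ∈ Finset.Icc 1 n
    · have : d i ∈ D := Finset.mem_image_of_mem d hi
      rw [← hset] at this
      obtain ⟨v, -, hv⟩ := Finset.mem_image.mp this
      exact ⟨v, fun _ => hv⟩
    · exact ⟨⟨0, hp⟩, fun h => absurd h hi⟩
  choose rep hrep using hrep'
  have hsubIcc : ∀ i ∈ Finset.Icc 1 (n-1), i ∈ Finset.Icc 1 n := by
    intro i hi
    rw [Finset.mem_Icc] at hi ⊢
    omega
  have hrepdeg : ∀ i ∈ Finset.Icc 1 (n-1), G.degree (rep i) = d i :=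
    fun i hi => hrep i (hsubIcc i hi)
  have hdiffer : ∀ i ∈ Finset.Icc 1 (n-1), d i ≠ d n := by
    intro i hi
    rw [Finset.mem_Icc] at hi
    have := hanti i n hi.1 (by omega) (le_refl n)
    omega
  set R := (Finset.Icc 1 (n-1)).image rep with hR
  have hinj : Set.InjOn rep (Finset.Icc 1 (n-1)) := by
    intro i hi j hj hij
    by_contra hne
    simp only [Finset.coe_Icc, Set.mem_Icc] at hi hj
    rcases Nat.lt_or_ge i j with hlt | hge
    · have h1 := hanti i j hi.1 hlt (by omega)
      have e1 : G.degree (rep i) = d i := hrepdeg i (Finset.mem_Icc.mpr hi)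
      have e2 : G.degree (rep j) = d j := hrepdeg j (Finset.mem_Icc.mpr hj)
      rw [hij, e2] at e1
      omega
    · have hlt : j < i := by omega
      have h1 := hanti j i hj.1 hlt (by omega)
      have e1 : G.degree (rep i) = d i := hrepdeg i (Finset.mem_Icc.mpr hi)
      have e2 : G.degree (rep j) = d j := hrepdeg j (Finset.mem_Icc.mpr hj)
      rw [hij, e2] at e1
      omega
  set m := d n with hm
  set T := ∑ v ∈ Finset.univ.filter (fun v => ¬ v ∈ R), G.degree v / m with hT
  have hv0deg : G.degree (rep n) = d n := hrep n hnIcc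
  have hv0R : rep n ∉ R := by
    intro hmem
    obtain ⟨i, hi, hie⟩ := Finset.mem_image.mp hmem
    have e1 : G.degree (rep i) = d i := hrepdeg i hi
    rw [hie, hv0deg] at e1
    exact hdiffer i hi e1.symm
  have hT1 : 1 ≤ T := by
    have hmem : rep n ∈ Finset.univ.filter (fun v => ¬ v ∈ R) := by
      rw [Finset.mem_filter]
      exact ⟨Finset.mem_univ _, hv0R⟩
    calc 1 = G.degree (rep n) / m := by rw [hv0deg, hm, Nat.div_self hdn]
    _ ≤ T := Finset.single_le_sum (f := fun v => G.degree v / m) (fun v _ => Nat.zero_le _) hmem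
  have hkept : Multiset.map (fun v => G.degree v) (Finset.univ.filter (fun v => v ∈ R)).val
      = Multiset.map (fun i => d (i+1)) (↑(List.range (n-1)) : Multiset ℕ) := by
    have h1 : Finset.univ.filter (fun v => v ∈ R) = R := by
      ext v; simp
    rw [h1, hR, Finset.image_val_of_injOn hinj, Multiset.map_map]
    rw [← icc_range_map d (n-1)]
    apply Multiset.map_congr rfl
    intro i hi
    exact hrepdeg i hi
  have hgraphic : IsGraphic (seqD n d (T-1)) := by
    apply isGraphic_split G m hdn (fun v => v ∈ R) hdpos
      (fun v _ => hDdvd _ (hdegD v))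
    rw [seqD_coe, hkept]
    congr 1
    rw [← hm]
    congr 1
    rw [show T - 1 + 1 = T from by omega, hT]
  refine ⟨T - 1, hgraphic, ?_⟩
  have hhand : ∑ v, G.degree v = 2 * q := by
    rw [G.sum_degrees_eq_twice_card_edges, hcard]
  have hsplit : ∑ v ∈ Finset.univ.filter (fun v => v ∈ R), G.degree v
      + ∑ v ∈ Finset.univ.filter (fun v => ¬ v ∈ R), G.degree v = ∑ v, G.degree v :=
    Finset.sum_filter_add_sum_filter_not _ _ _
  have hkeptsum : ∑ v ∈ Finset.univ.filter (fun v => v ∈ R), G.degree v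
      = ∑ i ∈ Finset.Icc 1 (n-1), d i := by
    have h1 : Finset.univ.filter (fun v => v ∈ R) = R := by ext v; simp
    rw [h1, hR, Finset.sum_image (fun a ha b hb h => hinj (by simpa using ha) (by simpa using hb) h)]
    exact Finset.sum_congr rfl hrepdeg
  have hrestsum : ∑ v ∈ Finset.univ.filter (fun v => ¬ v ∈ R), G.degree v = T * m := by
    rw [hT, Finset.sum_mul]
    apply Finset.sum_congr rfl
    intro v _
    exact (Nat.div_mul_cancel (hDdvd _ (hdegD v))).symm
  have hsigma : ∑ i ∈ Finset.Icc 1 n, d i = ∑ i ∈ Finset.Icc 1 (n-1), d i + d n := by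
    conv_lhs => rw [show n = (n-1)+1 from by omega]
    rw [Finset.sum_Icc_succ_top (by omega)]
    congr 1
    exact congrArg d (by omega)
  have hTm : T * m = (T - 1) * m + m := by
    conv_lhs => rw [show T = (T-1)+1 from by omega]
    ring
  rw [hsigma, ← hhand, ← hsplit, hkeptsum, hrestsum, hTm, hm]
  ring

lemma exists_graphic_seqD (n : ℕ) (hn : 0 < n) (d : ℕ → ℕ)
    (hpos : ∀ i ∈ Finset.Icc 1 n, 0 < d i)
    (hdvd : ∀ i ∈ Finset.Icc 1 n, d n ∣ d i) :
    ∃ C, IsGraphic (seqD n d C) := by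
  classical
  have hdn : 0 < d n := hpos n (Finset.mem_Icc.mpr ⟨hn, le_refl n⟩)
  have hd1pos : ∀ i : Fin n, 0 < d (i.val + 1) :=
    fun i => hpos _ (Finset.mem_Icc.mpr ⟨by omega, by omega⟩)
  set V0 := Σ i : Fin n, (Fin (d (i.val + 1)) ⊕ Fin (d n)) with hV0
  let G0 : SimpleGraph V0 := {
    Adj := fun x y => x.1 = y.1 ∧
      ((x.2.isLeft ∧ y.2.isRight) ∨ (x.2.isRight ∧ y.2.isLeft))
    symm := by
      constructor
      rintro x y ⟨h1, h2⟩
      exact ⟨h1.symm, by tauto⟩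
    loopless := by
      constructor
      rintro ⟨i, x2⟩ ⟨-, h⟩
      rcases x2 with a | a <;> simp at h }
  letI instG0 : DecidableRel G0.Adj := fun x y => by
    unfold G0
    infer_instance
  have hadj : ∀ (x y : V0), G0.Adj x y ↔ (x.1 = y.1 ∧
      ((x.2.isLeft ∧ y.2.isRight) ∨ (x.2.isRight ∧ y.2.isLeft))) := fun x y => Iff.rfl
  -- degree computations
  have hdegL : ∀ (i : Fin n) (a : Fin (d (i.val + 1))),
      G0.degree ⟨i, Sum.inl a⟩ = d n := by
    intro i a
    have himg : G0.neighborFinset ⟨i, Sum.inl a⟩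
        = Finset.univ.image (fun b : Fin (d n) => (⟨i, Sum.inr b⟩ : V0)) := by
      ext y
      rw [SimpleGraph.mem_neighborFinset, Finset.mem_image, hadj]
      constructor
      · rintro ⟨h1, h2⟩
        obtain ⟨j, (c | c)⟩ := y
        · simp at h2
        · obtain rfl : i = j := h1
          exact ⟨c, Finset.mem_univ c, rfl⟩
      · rintro ⟨b, -, rfl⟩
        exact ⟨rfl, Or.inl ⟨rfl, rfl⟩⟩
    show (G0.neighborFinset ⟨i, Sum.inl a⟩).card = d n
    rw [himg, Finset.card_image_of_injective _ (by
      intro x y h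
      injection h with h1 h2
      exact Sum.inr.inj h2)]
    simp
  have hdegR : ∀ (i : Fin n) (b : Fin (d n)),
      G0.degree ⟨i, Sum.inr b⟩ = d (i.val + 1) := by
    intro i b
    have himg : G0.neighborFinset ⟨i, Sum.inr b⟩
        = Finset.univ.image (fun a : Fin (d (i.val + 1)) => (⟨i, Sum.inl a⟩ : V0)) := by
      ext y
      rw [SimpleGraph.mem_neighborFinset, Finset.mem_image, hadj]
      constructor
      · rintro ⟨h1, h2⟩
        obtain ⟨j, (c | c)⟩ := y
        · obtain rfl : i = j := h1
          exact ⟨c, Finset.mem_univ c, rfl⟩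
        · simp at h2
      · rintro ⟨a, -, rfl⟩
        exact ⟨rfl, Or.inr ⟨rfl, rfl⟩⟩
    show (G0.neighborFinset ⟨i, Sum.inr b⟩).card = d (i.val + 1)
    rw [himg, Finset.card_image_of_injective _ (by
      intro x y h
      injection h with h1 h2
      exact Sum.inl.inj h2)]
    simp
  have hdpos : ∀ z : V0, 0 < G0.degree z := by
    rintro ⟨i, a | b⟩
    · rw [hdegL]; exact hdn
    · rw [hdegR]; exact hd1pos i
  have hddvd : ∀ z : V0, d n ∣ G0.degree z := by
    rintro ⟨i, a | b⟩
    · rw [hdegL]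
    · rw [hdegR]; exact hdvd _ (Finset.mem_Icc.mpr ⟨by omega, by omega⟩)
  set K : V0 → Prop := fun z => z.1.val < n - 1 ∧ z.2 = Sum.inr ⟨0, hdn⟩ with hK
  letI : DecidablePred K := fun z => by
    rw [hK]
    infer_instance
  set m := d n with hm
  set T := ∑ z ∈ Finset.univ.filter (fun z => ¬ K z), G0.degree z / m with hT
  have hT1 : 1 ≤ T := by
    set z0 : V0 := ⟨⟨0, hn⟩, Sum.inl ⟨0, hd1pos ⟨0, hn⟩⟩⟩ with hz0
    have hz0K : ¬ K z0 := by
      rw [hK]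
      rintro ⟨-, h⟩
      simp [hz0] at h
    have hmem : z0 ∈ Finset.univ.filter (fun z => ¬ K z) :=
      Finset.mem_filter.mpr ⟨Finset.mem_univ _, hz0K⟩
    calc 1 = G0.degree z0 / m := by rw [hz0, hdegL, hm, Nat.div_self hdn]
    _ ≤ T := Finset.single_le_sum (f := fun z => G0.degree z / m) (fun z _ => Nat.zero_le _) hmem
  have hkept : Multiset.map (fun z => G0.degree z) (Finset.univ.filter K).val
      = Multiset.map (fun i => d (i+1)) (↑(List.range (n-1)) : Multiset ℕ) := by
    have hle : n - 1 ≤ n := by omega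
    have himg : Finset.univ.filter K = Finset.univ.image
        (fun j : Fin (n-1) => (⟨⟨j.val, by omega⟩, Sum.inr ⟨0, hdn⟩⟩ : V0)) := by
      ext z
      rw [Finset.mem_filter, Finset.mem_image]
      constructor
      · rintro ⟨-, hKz⟩
        rw [hK] at hKz
        obtain ⟨i, x⟩ := z
        obtain ⟨h1, h2⟩ := hKz
        dsimp at h1 h2
        subst h2
        exact ⟨⟨i.val, h1⟩, Finset.mem_univ _, by simp⟩
      · rintro ⟨j, -, rfl⟩
        exact ⟨Finset.mem_univ _, ⟨j.isLt, rfl⟩⟩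
    rw [himg, Finset.image_val_of_injOn (by
      intro x _ y _ h
      simp only at h
      have : (x : ℕ) = (y : ℕ) := congrArg (fun z : V0 => z.1.val) h
      exact Fin.ext this), Multiset.map_map]
    have step1 : Multiset.map ((fun z => G0.degree z) ∘
          (fun j : Fin (n-1) => (⟨⟨j.val, by omega⟩, Sum.inr ⟨0, hdn⟩⟩ : V0)))
          (Finset.univ (α := Fin (n-1))).val
        = Multiset.map (fun j : Fin (n-1) => d (j.val + 1)) (Finset.univ (α := Fin (n-1))).val := by
      apply Multiset.map_congr rfl
      intro j _
      exact hdegR _ _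
    rw [step1]
    show Multiset.map (fun j : Fin (n-1) => d (j.val + 1)) (↑(List.finRange (n-1)) : Multiset _) = _
    rw [Multiset.map_coe, Multiset.map_coe, ← (show (List.finRange (n-1)).map Fin.val = List.range (n-1) from
      List.ext_getElem (by simp) (by simp)), List.map_map]
    rfl
  refine ⟨T - 1, ?_⟩
  apply isGraphic_split G0 m hdn K hdpos (fun z _ => hddvd z)
  rw [seqD_coe, hkept]
  congr 1
  congr 1
  rw [show T - 1 + 1 = T from by omega, hT]


/-- If the least element `d n` of `D = {d 1 > d 2 > … > d n}` divides every
element of `D`, then the least size of a graph with degree set `D` is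
`(σ(D) + C⋆ ⬝ d n) / 2`, where `C⋆` is the least `C ≥ 0` such that
`d 1, …, d (n-1), (d n)_{C+1}` is graphic. -/
theorem lq_of_min_dvd (n : ℕ) (hn : 0 < n) (d : ℕ → ℕ)
    (hanti : ∀ i j, 1 ≤ i → i < j → j ≤ n → d j < d i)
    (hpos : ∀ i ∈ Finset.Icc 1 n, 0 < d i)
    (hdvd : ∀ i ∈ Finset.Icc 1 n, d n ∣ d i) :
    ∃ Cstar : ℕ, IsGraphic (seqD n d Cstar) ∧
      (∀ C : ℕ, IsGraphic (seqD n d C) → Cstar ≤ C) ∧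
      2 * lq ((Finset.Icc 1 n).image d) = (∑ i ∈ Finset.Icc 1 n, d i) + Cstar * d n := by
  classical
  have hex : ∃ C, IsGraphic (seqD n d C) := exists_graphic_seqD n hn d hpos hdvd
  refine ⟨Nat.find hex, Nat.find_spec hex, fun C hC => Nat.find_min' hex hC, ?_⟩
  obtain ⟨q0, hq0mem, hq0⟩ := bridgeA n hn d (Nat.find hex) (Nat.find_spec hex)
  have hlow : ∀ q ∈ {q | ∃ (p : ℕ) (G : SimpleGraph (Fin p)) (inst : DecidableRel G.Adj),
      @degreeSet _ _ G inst = (Finset.Icc 1 n).image d ∧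
      (@SimpleGraph.edgeFinset _ G (@SimpleGraph.fintypeEdgeSet _ G _ inst)).card = q}, q0 ≤ q := by
    intro q hq
    obtain ⟨C, hCg, hCq⟩ := bridgeB n hn d hanti hpos hdvd q hq
    have h1 : Nat.find hex ≤ C := Nat.find_min' hex hCg
    have h2 : Nat.find hex * d n ≤ C * d n := Nat.mul_le_mul_right _ h1
    omega
  have hlq : lq ((Finset.Icc 1 n).image d) = q0 := by
    unfold lq
    exact le_antisymm (Nat.sInf_le hq0mem) (le_csInf ⟨q0, hq0mem⟩ hlow)
  rw [hlq, hq0]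
end

section
/- Let D be a set of positive integers with minimum element 2 and at least one odd element. Then there exists a graph with degree set D and exactly ℓ_q(D) edges whose degree sequence has exactly one copy of each element of D except possibly two copies of the smallest odd element of D and multiple copies of 2. -/
open Finset

namespace OGMT

set_option linter.unusedSectionVars false

lemma card_filter_sum {α β : Type*} [Fintype α] [Fintype β] (P : α ⊕ β → Prop) [DecidablePred P] :
    #(univ.filter P) = #(univ.filter (fun a => P (Sum.inl a))) + #(univ.filter (fun b => P (Sum.inr b))) := by
  rw [← Finset.card_toLeft_add_card_toRight]
  congr 1
  · congr 1; ext x; simp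
  · congr 1; ext x; simp

lemma sum_filter_sum_type {α β : Type*} [Fintype α] [Fintype β] (P : α ⊕ β → Prop)
    [DecidablePred P] (f : α ⊕ β → ℕ) :
    ∑ x ∈ univ.filter P, f x
      = ∑ a ∈ univ.filter (fun a => P (Sum.inl a)), f (Sum.inl a)
        + ∑ b ∈ univ.filter (fun b => P (Sum.inr b)), f (Sum.inr b) := by
  rw [Finset.sum_filter, Finset.sum_filter, Finset.sum_filter, Fintype.sum_sum_type]

variable {V : Type} [Fintype V] [DecidableEq V]

lemma card_filter_subtype (p : V → Prop) [DecidablePred p]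
    (q : V → Prop) [DecidablePred q] :
    #(univ.filter fun y : {v // p v} => q y.val) = #(univ.filter fun v => p v ∧ q v) := by
  apply Finset.card_bij (fun y _ => y.val)
  · rintro ⟨y, hy⟩ h; simp_all
  · rintro ⟨y, hy⟩ h1 ⟨z, hz⟩ h2 h; simpa using h
  · rintro v hv; simp only [mem_filter, mem_univ, true_and] at hv
    exact ⟨⟨v, hv.1⟩, by simpa using hv.2, rfl⟩

lemma sum_filter_subtype (p : V → Prop) [DecidablePred p]
    (q : V → Prop) [DecidablePred q] (f : V → ℕ) :
    ∑ y ∈ univ.filter (fun y : {v // p v} => q y.val), f y.val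
      = ∑ v ∈ univ.filter (fun v => p v ∧ q v), f v := by
  apply Finset.sum_bij (fun y _ => y.val)
  · rintro ⟨y, hy⟩ h; simp_all
  · rintro ⟨y, hy⟩ h1 ⟨z, hz⟩ h2 h; simpa using h
  · rintro v hv; simp only [mem_filter, mem_univ, true_and] at hv
    exact ⟨⟨v, hv.1⟩, by simpa using hv.2, rfl⟩
  · intros; rfl

lemma card_filter_split {α : Type*} [Fintype α] (P Q : α → Prop) [DecidablePred P] [DecidablePred Q] :
    #(univ.filter P) = #(univ.filter fun v => P v ∧ Q v) + #(univ.filter fun v => P v ∧ ¬ Q v) := by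
  rw [← Finset.filter_filter, ← Finset.filter_filter, Finset.card_filter_add_card_filter_not]

lemma sum_filter_split {α : Type*} [Fintype α] (P Q : α → Prop) [DecidablePred P] [DecidablePred Q]
    (f : α → ℕ) :
    ∑ v ∈ univ.filter P, f v
      = ∑ v ∈ univ.filter (fun v => P v ∧ Q v), f v
        + ∑ v ∈ univ.filter (fun v => P v ∧ ¬ Q v), f v := by
  rw [← Finset.filter_filter, ← Finset.filter_filter, Finset.sum_filter_add_sum_filter_not]

lemma deg_filter (G : SimpleGraph V) [DecidableRel G.Adj] (v : V) :
    G.degree v = #(univ.filter fun w => G.Adj v w) := by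
  rw [SimpleGraph.degree, SimpleGraph.neighborFinset_eq_filter]

/-- count of vertices of degree `e` -/
def cnt (G : SimpleGraph V) [DecidableRel G.Adj] (e : ℕ) : ℕ :=
  #(univ.filter fun v => G.degree v = e)

/-- measure: total degree of vertices of degree other than 2 -/
def mu (G : SimpleGraph V) [DecidableRel G.Adj] : ℕ :=
  ∑ v ∈ univ.filter (fun v => G.degree v ≠ 2), G.degree v

lemma cnt_pos (G : SimpleGraph V) [DecidableRel G.Adj] (e : ℕ)
    (he : e ∈ degreeSet G) : 1 ≤ cnt G e := by
  simp only [degreeSet, Finset.mem_image] at he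
  obtain ⟨v, _, hv⟩ := he
  rw [cnt]
  exact Finset.card_pos.mpr ⟨v, by simp [hv]⟩

lemma mem_degreeSet (G : SimpleGraph V) [DecidableRel G.Adj] (v : V) :
    G.degree v ∈ degreeSet G := by
  simp only [degreeSet, Finset.mem_image]
  exact ⟨v, Finset.mem_univ v, rfl⟩

def surg (G : SimpleGraph V) (S : Finset V) {W : Type} (F : W → Finset {x : V // x ∉ S}) :
    SimpleGraph ({x : V // x ∉ S} ⊕ W) where
  Adj a b :=
    match a, b with
    | Sum.inl x, Sum.inl y => G.Adj x.val y.val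
    | Sum.inl x, Sum.inr w => x ∈ F w
    | Sum.inr w, Sum.inl x => x ∈ F w
    | Sum.inr _, Sum.inr _ => False
  symm := by
    constructor
    rintro (x|w) (y|w') h
    · exact h.symm
    · exact h
    · exact h
    · exact h.elim
  loopless := by
    constructor
    rintro (x|w) h
    · exact G.loopless.irrefl x.val h
    · exact h

instance surgDec (G : SimpleGraph V) [DecidableRel G.Adj] (S : Finset V) {W : Type}
    (F : W → Finset {x : V // x ∉ S}) : DecidableRel (surg G S F).Adj := fun a b =>
  match a, b with
  | Sum.inl x, Sum.inl y => inferInstanceAs (Decidable (G.Adj x.val y.val))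
  | Sum.inl x, Sum.inr w => inferInstanceAs (Decidable (x ∈ F w))
  | Sum.inr w, Sum.inl x => inferInstanceAs (Decidable (x ∈ F w))
  | Sum.inr _, Sum.inr _ => inferInstanceAs (Decidable False)

variable (G : SimpleGraph V) [DecidableRel G.Adj] (S : Finset V) {W : Type} [Fintype W]
  [DecidableEq W] (F : W → Finset {x : V // x ∉ S})

/-- coverage hypothesis -/
def Covers : Prop :=
  ∀ x : {v : V // v ∉ S}, #(univ.filter fun w : W => x ∈ F w)
    = #(univ.filter fun v : V => G.Adj x.val v ∧ v ∈ S)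

lemma surg_degree_inl (hF : Covers G S F) (x : {v : V // v ∉ S}) :
    (surg G S F).degree (Sum.inl x) = G.degree x.val := by
  rw [deg_filter, card_filter_sum]
  have h1 : #(univ.filter fun y : {v : V // v ∉ S} => (surg G S F).Adj (Sum.inl x) (Sum.inl y))
      = #(univ.filter fun v : V => G.Adj x.val v ∧ v ∉ S) := by
    have e : (univ.filter fun y : {v : V // v ∉ S} => (surg G S F).Adj (Sum.inl x) (Sum.inl y))
        = (univ.filter fun y : {v : V // v ∉ S} => G.Adj x.val y.val) := rfl
    rw [e, card_filter_subtype (fun v => v ∉ S) (fun v => G.Adj x.val v)]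
    congr 1; ext v; simp [and_comm]
  have h2 : #(univ.filter fun w : W => (surg G S F).Adj (Sum.inl x) (Sum.inr w))
      = #(univ.filter fun v : V => G.Adj x.val v ∧ v ∈ S) := hF x
  rw [h1, h2, deg_filter, card_filter_split (fun v => G.Adj x.val v) (fun v => v ∈ S)]
  omega

lemma surg_degree_inr (w : W) : (surg G S F).degree (Sum.inr w) = #(F w) := by
  rw [deg_filter, card_filter_sum]
  have h1 : #(univ.filter fun y : {v : V // v ∉ S} => (surg G S F).Adj (Sum.inr w) (Sum.inl y))
      = #(F w) := by
    have e : (univ.filter fun y : {v : V // v ∉ S} => (surg G S F).Adj (Sum.inr w) (Sum.inl y))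
        = (univ.filter fun y => y ∈ F w) := rfl
    rw [e, Finset.filter_mem_eq_inter, Finset.univ_inter]
  have h2 : #(univ.filter fun w' : W => (surg G S F).Adj (Sum.inr w) (Sum.inr w')) = 0 := by
    simp only [Finset.card_eq_zero, Finset.filter_eq_empty_iff]
    intro w' _
    exact fun h => h
  rw [h1, h2]
  omega

lemma surg_edges (hF : Covers G S F) :
    2 * #(surg G S F).edgeFinset + ∑ v ∈ S, G.degree v
      = 2 * #G.edgeFinset + ∑ w : W, #(F w) := by
  have h := SimpleGraph.sum_degrees_eq_twice_card_edges (surg G S F)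
  rw [Fintype.sum_sum_type] at h
  rw [Finset.sum_congr rfl (fun x _ => surg_degree_inl G S F hF x),
    Finset.sum_congr rfl (fun w _ => surg_degree_inr G S F w)] at h
  have hsub : ∑ x : {v : V // v ∉ S}, G.degree x.val
      = ∑ v ∈ univ.filter (fun v => v ∉ S), G.degree v := by
    exact (Finset.sum_subtype _ (by simp) (fun v => G.degree v)).symm
  have hsplit : ∑ v ∈ univ.filter (fun v => v ∉ S), G.degree v
      + ∑ v ∈ univ.filter (fun v => v ∈ S), G.degree v = 2 * #G.edgeFinset := by
    have hnn : univ.filter (fun v => ¬ v ∉ S) = univ.filter (fun v => v ∈ S) := by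
      ext v; simp
    rw [← hnn, Finset.sum_filter_add_sum_filter_not univ (fun v => v ∉ S) (fun v => G.degree v),
      SimpleGraph.sum_degrees_eq_twice_card_edges]
  have hS : ∑ v ∈ univ.filter (fun v => v ∈ S), G.degree v = ∑ v ∈ S, G.degree v := by
    rw [Finset.filter_mem_eq_inter, Finset.univ_inter]
  rw [hsub] at h
  omega

lemma surg_mu (hF : Covers G S F) (hS2 : ∀ v ∈ S, G.degree v ≠ 2) :
    mu (surg G S F) + ∑ v ∈ S, G.degree v
      = mu G + ∑ w ∈ univ.filter (fun w : W => #(F w) ≠ 2), #(F w) := by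
  have h1 : mu (surg G S F)
      = ∑ x ∈ univ.filter (fun x : {v : V // v ∉ S} => G.degree x.val ≠ 2), G.degree x.val
        + ∑ w ∈ univ.filter (fun w : W => #(F w) ≠ 2), #(F w) := by
    rw [mu, sum_filter_sum_type]
    congr 1
    · rw [show (univ.filter fun a : {v : V // v ∉ S} => (surg G S F).degree (Sum.inl a) ≠ 2)
          = (univ.filter fun a : {v : V // v ∉ S} => G.degree a.val ≠ 2) from by
        apply Finset.filter_congr; intro x _; simp [surg_degree_inl G S F hF x]]
      exact Finset.sum_congr rfl (fun x _ => surg_degree_inl G S F hF x)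
    · rw [show (univ.filter fun w : W => (surg G S F).degree (Sum.inr w) ≠ 2)
          = (univ.filter fun w : W => #(F w) ≠ 2) from by
        apply Finset.filter_congr; intro w _; simp [surg_degree_inr G S F w]]
      exact Finset.sum_congr rfl (fun w _ => surg_degree_inr G S F w)
  have h2 : ∑ x ∈ univ.filter (fun x : {v : V // v ∉ S} => G.degree x.val ≠ 2), G.degree x.val
      = ∑ v ∈ univ.filter (fun v : V => v ∉ S ∧ G.degree v ≠ 2), G.degree v :=
    sum_filter_subtype (fun v => v ∉ S) (fun v => G.degree v ≠ 2) (fun v => G.degree v)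
  have h3 : mu G = ∑ v ∈ univ.filter (fun v : V => G.degree v ≠ 2 ∧ v ∈ S), G.degree v
      + ∑ v ∈ univ.filter (fun v : V => G.degree v ≠ 2 ∧ v ∉ S), G.degree v :=
    sum_filter_split (fun v => G.degree v ≠ 2) (fun v => v ∈ S) (fun v => G.degree v)
  have h4 : univ.filter (fun v : V => G.degree v ≠ 2 ∧ v ∈ S) = S := by
    ext v
    simp only [mem_filter, mem_univ, true_and]
    exact ⟨fun h => h.2, fun h => ⟨hS2 v h, h⟩⟩
  have h5 : (univ.filter (fun v : V => G.degree v ≠ 2 ∧ v ∉ S))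
      = (univ.filter (fun v : V => v ∉ S ∧ G.degree v ≠ 2)) := by
    ext v; simp [and_comm]
  rw [h1, h2, h3, h4, h5]
  omega

lemma surg_degreeSet (hF : Covers G S F) (hnew : ∀ w : W, #(F w) ∈ degreeSet G)
    (hwit : ∀ n ∈ degreeSet G, ∃ v, v ∉ S ∧ G.degree v = n) :
    degreeSet (surg G S F) = degreeSet G := by
  ext n
  simp only [degreeSet, Finset.mem_image]
  constructor
  · rintro ⟨a, -, rfl⟩
    rcases a with x | w
    · rw [surg_degree_inl G S F hF x]
      exact ⟨x.val, Finset.mem_univ _, rfl⟩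
    · rw [surg_degree_inr G S F w]
      have := hnew w
      simpa [degreeSet] using this
  · rintro ⟨v, -, rfl⟩
    obtain ⟨u, huS, hu⟩ := hwit (G.degree v) (mem_degreeSet G v)
    exact ⟨Sum.inl ⟨u, huS⟩, Finset.mem_univ _, by rw [surg_degree_inl G S F hF]; exact hu⟩


lemma card_filter_and_mem_singleton (P : V → Prop) [DecidablePred P] (v : V) :
    #(univ.filter fun u => P u ∧ u ∈ ({v} : Finset V)) = if P v then 1 else 0 := by
  have h : univ.filter (fun u => P u ∧ u ∈ ({v} : Finset V)) = ({v} : Finset V).filter P := by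
    ext u; simp [and_comm]
  rw [h, Finset.filter_singleton]
  split_ifs <;> simp

lemma card_filter_and_mem_pair (P : V → Prop) [DecidablePred P] (v1 v2 : V) (hne : v1 ≠ v2) :
    #(univ.filter fun u => P u ∧ u ∈ ({v1, v2} : Finset V))
      = (if P v1 then 1 else 0) + (if P v2 then 1 else 0) := by
  have h : univ.filter (fun u => P u ∧ u ∈ ({v1, v2} : Finset V))
      = ({v1, v2} : Finset V).filter P := by
    ext u; simp [and_comm]
  rw [h, Finset.filter_insert, Finset.filter_singleton]
  split_ifs <;> simp_all

lemma exists_pairing {α : Type} [DecidableEq α] [Fintype α] (T : Finset α) (k : ℕ) (hT : #T = 2 * k) :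
    ∃ F : Fin k → Finset α,
      (∀ i, #(F i) = 2 ∧ F i ⊆ T) ∧
      (∀ x, #(univ.filter fun i => x ∈ F i) = if x ∈ T then 1 else 0) := by
  have hg : ∀ j : ℕ, j < 2 * k → j < #T := fun j hj => hT ▸ hj
  set g : Fin (2 * k) → α := fun j => (T.equivFin.symm ⟨j.val, hg j.val j.isLt⟩).val with hgdef
  have ginj : Function.Injective g := by
    intro a b hab
    have := T.equivFin.symm.injective (Subtype.val_injective hab)
    simpa [Fin.ext_iff] using congrArg Fin.val this
  have gmem : ∀ j, g j ∈ T := fun j => (T.equivFin.symm ⟨j.val, _⟩).2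
  refine ⟨fun i => {g ⟨2 * i.val, by omega⟩, g ⟨2 * i.val + 1, by omega⟩}, fun i => ⟨?_, ?_⟩, ?_⟩
  · rw [Finset.card_pair]
    intro hcontra
    have := congrArg Fin.val (ginj hcontra)
    simp at this
  · intro x hx
    simp only [Finset.mem_insert, Finset.mem_singleton] at hx
    rcases hx with h | h <;> exact h ▸ gmem _
  · intro x
    by_cases hx : x ∈ T
    · rw [if_pos hx]
      have hjlt : (T.equivFin ⟨x, hx⟩).val < 2 * k := by rw [← hT]; exact (T.equivFin ⟨x, hx⟩).isLt
      set jv : ℕ := (T.equivFin ⟨x, hx⟩).val with hjv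
      have hxg : x = g ⟨jv, hjlt⟩ := by
        have h1 : T.equivFin.symm ⟨jv, hg jv hjlt⟩ = ⟨x, hx⟩ := by
          have : (⟨jv, hg jv hjlt⟩ : Fin #T) = T.equivFin ⟨x, hx⟩ := Fin.ext rfl
          rw [this, Equiv.symm_apply_apply]
        exact (congrArg Subtype.val h1).symm
      apply Finset.card_eq_one.mpr
      refine ⟨⟨jv / 2, by omega⟩, ?_⟩
      ext i
      simp only [mem_filter, mem_univ, true_and, Finset.mem_insert, Finset.mem_singleton]
      constructor
      · rintro (h | h) <;>
        · have hv := congrArg Fin.val (ginj (hxg.symm.trans h))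
          simp only at hv
          apply Fin.ext
          simp only
          omega
      · intro h
        have hiv : i.val = jv / 2 := by simpa [Fin.ext_iff] using h
        rcases Nat.even_or_odd jv with ⟨t, ht⟩ | ⟨t, ht⟩
        · exact Or.inl (hxg.trans (congrArg g (Fin.ext (by simp only; omega))))
        · exact Or.inr (hxg.trans (congrArg g (Fin.ext (by simp only; omega))))
    · rw [if_neg hx]
      rw [Finset.card_eq_zero, Finset.filter_eq_empty_iff]
      intro i _
      simp only [Finset.mem_insert, Finset.mem_singleton]
      push_neg
      exact ⟨fun h => hx (h ▸ gmem _), fun h => hx (h ▸ gmem _)⟩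

lemma exists_blocks {α : Type} [DecidableEq α] [Fintype α] (T : Finset α) (m k : ℕ)
    (hmT : #T = m + 2 * k) :
    ∃ F : Unit ⊕ Fin k → Finset α,
      #(F (Sum.inl ())) = m ∧ (∀ i, #(F (Sum.inr i)) = 2) ∧
      (∀ x, #(univ.filter fun w => x ∈ F w) = if x ∈ T then 1 else 0) := by
  obtain ⟨B, hBT, hBcard⟩ := Finset.exists_subset_card_eq (show m ≤ #T by omega)
  have hsd : #(T \ B) = 2 * k := by rw [Finset.card_sdiff_of_subset hBT]; omega
  obtain ⟨P, hP1, hP2⟩ := exists_pairing (T \ B) k hsd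
  refine ⟨Sum.elim (fun _ => B) P, hBcard, fun i => (hP1 i).1, fun x => ?_⟩
  rw [card_filter_sum (fun w => x ∈ Sum.elim (fun _ => B) P w)]
  simp only [Sum.elim_inl, Sum.elim_inr]
  erw [hP2 x]
  by_cases hxB : x ∈ B
  · have hxT : x ∈ T := hBT hxB
    have : x ∉ T \ B := by simp [hxB]
    simp [hxB, hxT, this]
  · by_cases hxT : x ∈ T
    · have : x ∈ T \ B := by simp [hxB, hxT]
      simp [hxB, hxT, this]
    · have : x ∉ T \ B := by simp [hxT]
      simp [hxB, hxT, this]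

lemma step_single (G : SimpleGraph V) [DecidableRel G.Adj] (v : V) (m' k : ℕ)
    (hsplit : G.degree v = m' + 2 * k) (hd2 : G.degree v ≠ 2)
    (hm' : m' ∈ degreeSet G) (h2' : 2 ∈ degreeSet G)
    (hwit : ∀ n ∈ degreeSet G, ∃ u, u ≠ v ∧ G.degree u = n) :
    ∃ (V' : Type) (_ : Fintype V') (_ : DecidableEq V') (G' : SimpleGraph V')
      (_ : DecidableRel G'.Adj),
      degreeSet G' = degreeSet G ∧ 2 * #G'.edgeFinset = 2 * #G.edgeFinset ∧
      mu G' + G.degree v = mu G + (if m' = 2 then 0 else m') := by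
  classical
  set S : Finset V := {v} with hS
  set T : Finset {x : V // x ∉ S} := univ.filter (fun x => G.Adj v x.val) with hT
  have hTcard : #T = m' + 2 * k := by
    rw [hT, card_filter_subtype (fun u => u ∉ S) (fun u => G.Adj v u)]
    have h0 : #(univ.filter fun u => G.Adj v u ∧ u ∈ S) = 0 := by
      rw [hS, card_filter_and_mem_singleton (fun u => G.Adj v u) v]
      simp
    have hsplit2 := card_filter_split (fun u => G.Adj v u) (fun u => u ∈ S)
    have hd := deg_filter G v
    have hcomm : (univ.filter fun u => u ∉ S ∧ G.Adj v u)
        = (univ.filter fun u => G.Adj v u ∧ u ∉ S) := by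
      ext u; simp [and_comm]
    rw [hcomm]
    omega
  obtain ⟨F, hF1, hF2, hF3⟩ := exists_blocks T m' k hTcard
  have hcov : Covers G S F := by
    intro x
    have h0 : #(univ.filter fun u => G.Adj x.val u ∧ u ∈ S) = if G.Adj x.val v then 1 else 0 :=
      card_filter_and_mem_singleton (fun u => G.Adj x.val u) v
    have hiff : (x ∈ T) ↔ G.Adj x.val v := by
      rw [hT]
      simp only [Finset.mem_filter, Finset.mem_univ, true_and]
      exact G.adj_comm v x.val
    rw [hF3 x, h0]
    exact if_congr hiff rfl rfl
  refine ⟨_, inferInstance, inferInstance, surg G S F, inferInstance, ?_, ?_, ?_⟩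
  · apply surg_degreeSet G S F hcov
    · rintro (a | i)
      · cases a; rw [hF1]; exact hm'
      · rw [hF2]; exact h2'
    · intro n hn
      obtain ⟨u, hu, hud⟩ := hwit n hn
      exact ⟨u, by simp [hS, hu], hud⟩
  · have he := surg_edges G S F hcov
    have hSsum : ∑ u ∈ S, G.degree u = G.degree v := Finset.sum_singleton _ _
    have hsum : ∑ w : Unit ⊕ Fin k, #(F w) = m' + 2 * k := by
      rw [Fintype.sum_sum_type]
      have h1 : ∑ a : Unit, #(F (Sum.inl a)) = m' := by
        have hFa : ∀ a : Unit, #(F (Sum.inl a)) = m' := fun a => by cases a; exact hF1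
        simp [hFa]
      have h2 : ∑ i : Fin k, #(F (Sum.inr i)) = 2 * k := by
        rw [Finset.sum_congr rfl (fun i _ => hF2 i)]
        simp [mul_comm]
      omega
    omega
  · have hmu := surg_mu G S F hcov ?hS2
    case hS2 =>
      intro u hu
      have huv : u = v := Finset.mem_singleton.mp hu
      subst huv
      exact hd2
    have hSsum : ∑ u ∈ S, G.degree u = G.degree v := Finset.sum_singleton _ _
    have hfil : ∑ w ∈ univ.filter (fun w : Unit ⊕ Fin k => #(F w) ≠ 2), #(F w)
        = if m' = 2 then 0 else m' := by
      rw [sum_filter_sum_type]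
      have hr : ∑ i ∈ univ.filter (fun i : Fin k => #(F (Sum.inr i)) ≠ 2), #(F (Sum.inr i)) = 0 := by
        have : (univ.filter (fun i : Fin k => #(F (Sum.inr i)) ≠ 2)) = ∅ := by
          rw [Finset.filter_eq_empty_iff]
          intro i _
          simp [hF2 i]
        rw [this, Finset.sum_empty]
      have hFa : ∀ a : Unit, #(F (Sum.inl a)) = m' := fun a => by cases a; exact hF1
      have hl : ∑ a ∈ univ.filter (fun a : Unit => #(F (Sum.inl a)) ≠ 2), #(F (Sum.inl a))
          = if m' = 2 then 0 else m' := by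
        by_cases hm2 : m' = 2
        · simp [hFa, hm2]
        · simp [hFa, hm2]
      omega
    omega

lemma step_pair (G : SimpleGraph V) [DecidableRel G.Adj] (v1 v2 : V) (hne : v1 ≠ v2) (t : ℕ)
    (hd1 : G.degree v1 = 2 * t + 1) (hd2 : G.degree v2 = 2 * t + 1) (ht : 1 ≤ t)
    (h2' : 2 ∈ degreeSet G)
    (hwit : ∀ n ∈ degreeSet G, ∃ u, u ≠ v1 ∧ u ≠ v2 ∧ G.degree u = n) :
    ∃ (V' : Type) (_ : Fintype V') (_ : DecidableEq V') (G' : SimpleGraph V')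
      (_ : DecidableRel G'.Adj),
      degreeSet G' = degreeSet G ∧
      2 * #G'.edgeFinset + (if G.Adj v1 v2 then 2 else 0) = 2 * #G.edgeFinset ∧
      mu G' + (4 * t + 2) = mu G := by
  classical
  set S : Finset V := {v1, v2} with hS
  set T1 : Finset {x : V // x ∉ S} := univ.filter (fun x => G.Adj v1 x.val) with hT1def
  set T2 : Finset {x : V // x ∉ S} := univ.filter (fun x => G.Adj v2 x.val) with hT2def
  have hSmem : ∀ u : V, u ∈ S ↔ u = v1 ∨ u = v2 := by
    intro u
    rw [hS]
    simp
  have hT1card : #T1 + (if G.Adj v1 v2 then 1 else 0) = 2 * t + 1 := by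
    rw [hT1def, card_filter_subtype (fun u => u ∉ S) (fun u => G.Adj v1 u)]
    have hp : #(univ.filter fun u => G.Adj v1 u ∧ u ∈ S)
        = (if G.Adj v1 v1 then 1 else 0) + (if G.Adj v1 v2 then 1 else 0) :=
      card_filter_and_mem_pair (fun u => G.Adj v1 u) v1 v2 hne
    simp only [SimpleGraph.irrefl, if_false, zero_add] at hp
    have hsplit2 := card_filter_split (fun u => G.Adj v1 u) (fun u => u ∈ S)
    have hd := deg_filter G v1
    have hcomm : (univ.filter fun u => u ∉ S ∧ G.Adj v1 u)
        = (univ.filter fun u => G.Adj v1 u ∧ u ∉ S) := by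
      ext u; simp [and_comm]
    rw [hcomm]
    omega
  have hT2card : #T2 + (if G.Adj v1 v2 then 1 else 0) = 2 * t + 1 := by
    rw [hT2def, card_filter_subtype (fun u => u ∉ S) (fun u => G.Adj v2 u)]
    have hp : #(univ.filter fun u => G.Adj v2 u ∧ u ∈ S)
        = (if G.Adj v2 v1 then 1 else 0) + (if G.Adj v2 v2 then 1 else 0) :=
      card_filter_and_mem_pair (fun u => G.Adj v2 u) v1 v2 hne
    simp only [SimpleGraph.irrefl, if_false, add_zero] at hp
    rw [if_congr (G.adj_comm v2 v1) rfl rfl] at hp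
    have hsplit2 := card_filter_split (fun u => G.Adj v2 u) (fun u => u ∈ S)
    have hd := deg_filter G v2
    have hcomm : (univ.filter fun u => u ∉ S ∧ G.Adj v2 u)
        = (univ.filter fun u => G.Adj v2 u ∧ u ∉ S) := by
      ext u; simp [and_comm]
    rw [hcomm]
    omega
  have hS2 : ∀ u ∈ S, G.degree u ≠ 2 := by
    intro u hu
    rcases (hSmem u).mp hu with rfl | rfl <;> omega
  have hSsum : ∑ u ∈ S, G.degree u = G.degree v1 + G.degree v2 := Finset.sum_pair hne
  have hmemT1 : ∀ x : {v : V // v ∉ S}, x ∈ T1 ↔ G.Adj x.val v1 := by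
    intro x
    rw [hT1def]
    simp only [Finset.mem_filter, Finset.mem_univ, true_and]
    exact G.adj_comm v1 x.val
  have hmemT2 : ∀ x : {v : V // v ∉ S}, x ∈ T2 ↔ G.Adj x.val v2 := by
    intro x
    rw [hT2def]
    simp only [Finset.mem_filter, Finset.mem_univ, true_and]
    exact G.adj_comm v2 x.val
  have hRHS : ∀ x : {v : V // v ∉ S}, #(univ.filter fun v : V => G.Adj x.val v ∧ v ∈ S)
      = (if x ∈ T1 then 1 else 0) + (if x ∈ T2 then 1 else 0) := by
    intro x
    have hp : #(univ.filter fun u => G.Adj x.val u ∧ u ∈ S)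
        = (if G.Adj x.val v1 then 1 else 0) + (if G.Adj x.val v2 then 1 else 0) :=
      card_filter_and_mem_pair (fun u => G.Adj x.val u) v1 v2 hne
    rw [hp, if_congr (hmemT1 x) rfl rfl, if_congr (hmemT2 x) rfl rfl]
  by_cases hadj : G.Adj v1 v2
  · -- adjacent case
    have h1 : #T1 = 2 * t := by rw [if_pos hadj] at hT1card; omega
    have h2 : #T2 = 2 * t := by rw [if_pos hadj] at hT2card; omega
    obtain ⟨P1, hP1a, hP1b⟩ := exists_pairing T1 t h1
    obtain ⟨P2, hP2a, hP2b⟩ := exists_pairing T2 t h2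
    set F : Fin t ⊕ Fin t → Finset {x : V // x ∉ S} := Sum.elim P1 P2 with hF
    have hcov : Covers G S F := by
      intro x
      rw [card_filter_sum (fun w => x ∈ F w)]
      simp only [hF, Sum.elim_inl, Sum.elim_inr]
      rw [hP1b x, hP2b x, hRHS x]
    refine ⟨_, inferInstance, inferInstance, surg G S F, inferInstance, ?_, ?_, ?_⟩
    · apply surg_degreeSet G S F hcov
      · rintro (i | i)
        · rw [show F (Sum.inl i) = P1 i from rfl, (hP1a i).1]; exact h2'
        · rw [show F (Sum.inr i) = P2 i from rfl, (hP2a i).1]; exact h2'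
      · intro n hn
        obtain ⟨u, hu1, hu2, hud⟩ := hwit n hn
        exact ⟨u, by rw [hSmem u]; tauto, hud⟩
    · have he := surg_edges G S F hcov
      have hsum : ∑ w : Fin t ⊕ Fin t, #(F w) = 4 * t := by
        rw [Fintype.sum_sum_type]
        have f1 : ∀ i : Fin t, #(F (Sum.inl i)) = 2 := fun i => (hP1a i).1
        have f2 : ∀ i : Fin t, #(F (Sum.inr i)) = 2 := fun i => (hP2a i).1
        have e1 : ∑ i : Fin t, #(F (Sum.inl i)) = 2 * t := by
          simp [f1, Finset.sum_const, mul_comm]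
        have e2 : ∑ i : Fin t, #(F (Sum.inr i)) = 2 * t := by
          simp [f2, Finset.sum_const, mul_comm]
        omega
      rw [if_pos hadj]
      omega
    · have hmu := surg_mu G S F hcov hS2
      have hfil : ∑ w ∈ univ.filter (fun w : Fin t ⊕ Fin t => #(F w) ≠ 2), #(F w) = 0 := by
        have : (univ.filter (fun w : Fin t ⊕ Fin t => #(F w) ≠ 2)) = ∅ := by
          rw [Finset.filter_eq_empty_iff]
          rintro (i | i) _
          · simp [hF, (hP1a i).1]
          · simp [hF, (hP2a i).1]
        rw [this, Finset.sum_empty]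
      omega
  · -- non-adjacent case
    have h1 : #T1 = 2 * t + 1 := by rw [if_neg hadj] at hT1card; omega
    have h2 : #T2 = 2 * t + 1 := by rw [if_neg hadj] at hT2card; omega
    have hx1ex : T1.Nonempty := by rw [← Finset.card_pos, h1]; omega
    obtain ⟨x1, hx1⟩ := hx1ex
    have hx2ex : (T2.erase x1).Nonempty := by
      rw [← Finset.card_pos]
      have := Finset.pred_card_le_card_erase (s := T2) (a := x1)
      omega
    obtain ⟨x2, hx2e⟩ := hx2ex
    have hx2T2 : x2 ∈ T2 := Finset.mem_of_mem_erase hx2e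
    have hx21 : x2 ≠ x1 := Finset.ne_of_mem_erase hx2e
    have h1e : #(T1.erase x1) = 2 * t := by rw [Finset.card_erase_of_mem hx1, h1]; omega
    have h2e : #(T2.erase x2) = 2 * t := by rw [Finset.card_erase_of_mem hx2T2, h2]; omega
    obtain ⟨P1, hP1a, hP1b⟩ := exists_pairing (T1.erase x1) t h1e
    obtain ⟨P2, hP2a, hP2b⟩ := exists_pairing (T2.erase x2) t h2e
    set F : Unit ⊕ (Fin t ⊕ Fin t) → Finset {x : V // x ∉ S} :=
      Sum.elim (fun _ => ({x1, x2} : Finset {x : V // x ∉ S})) (Sum.elim P1 P2) with hF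
    have hB0card : #({x1, x2} : Finset {x : V // x ∉ S}) = 2 := Finset.card_pair hx21.symm
    have hcov : Covers G S F := by
      intro x
      rw [card_filter_sum (fun w => x ∈ F w), card_filter_sum
        (fun w : Fin t ⊕ Fin t => x ∈ F (Sum.inr w))]
      simp only [hF, Sum.elim_inl, Sum.elim_inr]
      rw [hP1b x, hP2b x, hRHS x]
      have hunit : #(univ.filter fun _ : Unit => x ∈ ({x1, x2} : Finset {x : V // x ∉ S}))
          = if x = x1 ∨ x = x2 then 1 else 0 := by
        by_cases hx : x ∈ ({x1, x2} : Finset {x : V // x ∉ S})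
        · have : x = x1 ∨ x = x2 := by simpa using hx
          simp [hx, this]
        · have : ¬ (x = x1 ∨ x = x2) := by simpa using hx
          simp [hx, this]
      rw [hunit]
      by_cases hxx1 : x = x1
      · subst hxx1
        have e1 : x ∉ T1.erase x := Finset.notMem_erase x T1
        have e2 : (x ∈ T2.erase x2) ↔ x ∈ T2 := by
          rw [Finset.mem_erase]
          have : x ≠ x2 := fun h => hx21 h.symm
          tauto
        rw [if_pos (Or.inl rfl), if_pos hx1, if_neg e1, if_congr e2 rfl rfl]
        omega
      · by_cases hxx2 : x = x2
        · subst hxx2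
          have e2 : x ∉ T2.erase x := Finset.notMem_erase x T2
          have e1 : (x ∈ T1.erase x1) ↔ x ∈ T1 := by
            rw [Finset.mem_erase]
            tauto
          rw [if_pos (Or.inr rfl), if_pos hx2T2, if_neg e2, if_congr e1 rfl rfl]
          omega
        · have e1 : (x ∈ T1.erase x1) ↔ x ∈ T1 := by
            rw [Finset.mem_erase]
            tauto
          have e2 : (x ∈ T2.erase x2) ↔ x ∈ T2 := by
            rw [Finset.mem_erase]
            tauto
          rw [if_neg (by tauto : ¬ (x = x1 ∨ x = x2)), if_congr e1 rfl rfl,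
            if_congr e2 rfl rfl]
          omega
    refine ⟨_, inferInstance, inferInstance, surg G S F, inferInstance, ?_, ?_, ?_⟩
    · apply surg_degreeSet G S F hcov
      · rintro (u | i | i)
        · rw [show F (Sum.inl u) = ({x1, x2} : Finset {x : V // x ∉ S}) from rfl, hB0card]
          exact h2'
        · rw [show F (Sum.inr (Sum.inl i)) = P1 i from rfl, (hP1a i).1]; exact h2'
        · rw [show F (Sum.inr (Sum.inr i)) = P2 i from rfl, (hP2a i).1]; exact h2'
      · intro n hn
        obtain ⟨u, hu1, hu2, hud⟩ := hwit n hn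
        exact ⟨u, by rw [hSmem u]; tauto, hud⟩
    · have he := surg_edges G S F hcov
      have hsum : ∑ w : Unit ⊕ (Fin t ⊕ Fin t), #(F w) = 4 * t + 2 := by
        rw [Fintype.sum_sum_type, Fintype.sum_sum_type]
        have e0 : ∑ u : Unit, #(F (Sum.inl u)) = 2 := by simp [hF, hB0card]
        have f1 : ∀ i : Fin t, #(F (Sum.inr (Sum.inl i))) = 2 := fun i => (hP1a i).1
        have f2 : ∀ i : Fin t, #(F (Sum.inr (Sum.inr i))) = 2 := fun i => (hP2a i).1
        have e1 : ∑ i : Fin t, #(F (Sum.inr (Sum.inl i))) = 2 * t := by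
          simp [f1, Finset.sum_const, mul_comm]
        have e2 : ∑ i : Fin t, #(F (Sum.inr (Sum.inr i))) = 2 * t := by
          simp [f2, Finset.sum_const, mul_comm]
        omega
      rw [if_neg hadj]
      omega
    · have hmu := surg_mu G S F hcov hS2
      have hfil : ∑ w ∈ univ.filter (fun w : Unit ⊕ (Fin t ⊕ Fin t) => #(F w) ≠ 2), #(F w) = 0 := by
        have : (univ.filter (fun w : Unit ⊕ (Fin t ⊕ Fin t) => #(F w) ≠ 2)) = ∅ := by
          rw [Finset.filter_eq_empty_iff]
          rintro (u | i | i) _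
          · simp [hF, hB0card]
          · simp [hF, (hP1a i).1]
          · simp [hF, (hP2a i).1]
        rw [this, Finset.sum_empty]
      omega

instance sumDec {α β : Type*} (G : SimpleGraph α) (H : SimpleGraph β) [DecidableRel G.Adj]
    [DecidableRel H.Adj] : DecidableRel (G ⊕g H).Adj := fun a b =>
  match a, b with
  | Sum.inl x, Sum.inl y => inferInstanceAs (Decidable (G.Adj x y))
  | Sum.inl _, Sum.inr _ => Decidable.isFalse (by simp)
  | Sum.inr _, Sum.inl _ => Decidable.isFalse (by simp)
  | Sum.inr x, Sum.inr y => inferInstanceAs (Decidable (H.Adj x y))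

lemma sum_degree_inl {α β : Type} [Fintype α] [Fintype β] [DecidableEq α] [DecidableEq β] (G : SimpleGraph α)
    (H : SimpleGraph β) [DecidableRel G.Adj] [DecidableRel H.Adj] (a : α) :
    (G ⊕g H).degree (Sum.inl a) = G.degree a := by
  have hd : ∀ v, (G ⊕g H).degree v = #(univ.filter fun w => (G ⊕g H).Adj v w) :=
    fun v => by convert deg_filter (G ⊕g H) v
  rw [hd, deg_filter, card_filter_sum]
  have h2 : #(univ.filter fun b : β => (G ⊕g H).Adj (Sum.inl a) (Sum.inr b)) = 0 := by
    rw [Finset.card_eq_zero, Finset.filter_eq_empty_iff]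
    intro b _
    simp
  have h1 : #(univ.filter fun x : α => (G ⊕g H).Adj (Sum.inl a) (Sum.inl x))
      = #(univ.filter fun x : α => G.Adj a x) := by
    congr 1
  omega

lemma sum_degree_inr {α β : Type} [Fintype α] [Fintype β] [DecidableEq α] [DecidableEq β] (G : SimpleGraph α)
    (H : SimpleGraph β) [DecidableRel G.Adj] [DecidableRel H.Adj] (b : β) :
    (G ⊕g H).degree (Sum.inr b) = H.degree b := by
  have hd : ∀ v, (G ⊕g H).degree v = #(univ.filter fun w => (G ⊕g H).Adj v w) :=
    fun v => by convert deg_filter (G ⊕g H) v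
  rw [hd, deg_filter, card_filter_sum]
  have h2 : #(univ.filter fun a : α => (G ⊕g H).Adj (Sum.inr b) (Sum.inl a)) = 0 := by
    rw [Finset.card_eq_zero, Finset.filter_eq_empty_iff]
    intro a _
    simp
  have h1 : #(univ.filter fun y : β => (G ⊕g H).Adj (Sum.inr b) (Sum.inr y))
      = #(univ.filter fun y : β => H.Adj b y) := by
    congr 1
  omega

lemma sum_degreeSet {α β : Type} [Fintype α] [Fintype β] [DecidableEq α] [DecidableEq β] (G : SimpleGraph α)
    (H : SimpleGraph β) [DecidableRel G.Adj] [DecidableRel H.Adj] :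
    degreeSet (G ⊕g H) = degreeSet G ∪ degreeSet H := by
  ext n
  simp only [degreeSet, Finset.mem_union, Finset.mem_image, Finset.mem_univ, true_and]
  constructor
  · rintro ⟨(a | b), rfl⟩
    · exact Or.inl ⟨a, by convert (sum_degree_inl G H a).symm⟩
    · exact Or.inr ⟨b, by convert (sum_degree_inr G H b).symm⟩
  · rintro (⟨a, rfl⟩ | ⟨b, rfl⟩)
    · exact ⟨Sum.inl a, by convert sum_degree_inl G H a⟩
    · exact ⟨Sum.inr b, by convert sum_degree_inr G H b⟩

/-- gadget graph realizing degree set {n, 2} for n ≥ 2: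
two "centers" (adjacent iff n is odd), each attached to n/2 pairs of satellites
forming triangles. -/
def gadget (n : ℕ) : SimpleGraph (Fin 2 ⊕ (Fin 2 × Fin (n / 2) × Fin 2)) where
  Adj x y :=
    match x, y with
    | Sum.inl a, Sum.inl b => a ≠ b ∧ n % 2 = 1
    | Sum.inl a, Sum.inr w => a = w.1
    | Sum.inr w, Sum.inl a => a = w.1
    | Sum.inr w, Sum.inr w' => w.1 = w'.1 ∧ w.2.1 = w'.2.1 ∧ w.2.2 ≠ w'.2.2
  symm := by
    constructor
    rintro (a | w) (b | w') h
    · exact ⟨h.1.symm, h.2⟩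
    · exact h
    · exact h
    · exact ⟨h.1.symm, h.2.1.symm, h.2.2.symm⟩
  loopless := by
    constructor
    rintro (a | w) h
    · exact h.1 rfl
    · exact h.2.2 rfl

instance gadgetDec (n : ℕ) : DecidableRel (gadget n).Adj := fun x y =>
  match x, y with
  | Sum.inl a, Sum.inl b => inferInstanceAs (Decidable (a ≠ b ∧ n % 2 = 1))
  | Sum.inl a, Sum.inr w => inferInstanceAs (Decidable (a = w.1))
  | Sum.inr w, Sum.inl a => inferInstanceAs (Decidable (a = w.1))
  | Sum.inr w, Sum.inr w' => inferInstanceAs (Decidable (w.1 = w'.1 ∧ w.2.1 = w'.2.1 ∧ w.2.2 ≠ w'.2.2))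

lemma gadget_degree_center (n : ℕ) (a : Fin 2) : (gadget n).degree (Sum.inl a) = n := by
  rw [deg_filter, card_filter_sum]
  have h1 : #(univ.filter fun b : Fin 2 => (gadget n).Adj (Sum.inl a) (Sum.inl b)) = n % 2 := by
    have e : (univ.filter fun b : Fin 2 => (gadget n).Adj (Sum.inl a) (Sum.inl b))
        = (univ.filter fun b : Fin 2 => a ≠ b ∧ n % 2 = 1) := rfl
    rw [e]
    by_cases h : n % 2 = 1
    · rw [h]
      have : (univ.filter fun b : Fin 2 => a ≠ b ∧ 1 = 1) = univ.erase a := by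
        ext b
        simp [eq_comm, ne_comm]
      rw [this, Finset.card_erase_of_mem (Finset.mem_univ a)]
      simp
    · have h0 : n % 2 = 0 := by omega
      rw [h0]
      have : (univ.filter fun b : Fin 2 => a ≠ b ∧ (0:ℕ) = 1) = ∅ := by
        rw [Finset.filter_eq_empty_iff]
        intro b _
        simp
      rw [this]
      simp
  have h2 : #(univ.filter fun w : Fin 2 × Fin (n / 2) × Fin 2 =>
      (gadget n).Adj (Sum.inl a) (Sum.inr w)) = (n / 2) * 2 := by
    have e : (univ.filter fun w : Fin 2 × Fin (n / 2) × Fin 2 =>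
        (gadget n).Adj (Sum.inl a) (Sum.inr w))
        = (univ.filter fun w : Fin 2 × Fin (n / 2) × Fin 2 => a = w.1) := rfl
    rw [e]
    have hb : #(univ.filter fun w : Fin 2 × Fin (n / 2) × Fin 2 => a = w.1)
        = #(univ : Finset (Fin (n / 2) × Fin 2)) := by
      apply Finset.card_bij (fun (w : Fin 2 × Fin (n / 2) × Fin 2) _ => w.2)
      · intro w _
        exact Finset.mem_univ _
      · rintro ⟨b, p⟩ h1 ⟨b', p'⟩ h2 h
        simp only [Finset.mem_filter] at h1 h2
        simp only at h
        rw [Prod.ext_iff]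
        exact ⟨h1.2.symm.trans h2.2, h⟩
      · intro p _
        exact ⟨⟨a, p⟩, by simp, rfl⟩
    rw [hb, Finset.card_univ, Fintype.card_prod, Fintype.card_fin, Fintype.card_fin]
  rw [h1, h2]
  omega

lemma gadget_degree_sat (n : ℕ) (w : Fin 2 × Fin (n / 2) × Fin 2) :
    (gadget n).degree (Sum.inr w) = 2 := by
  rw [deg_filter, card_filter_sum]
  have h1 : #(univ.filter fun a : Fin 2 => (gadget n).Adj (Sum.inr w) (Sum.inl a)) = 1 := by
    have e : (univ.filter fun a : Fin 2 => (gadget n).Adj (Sum.inr w) (Sum.inl a))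
        = (univ.filter fun a : Fin 2 => a = w.1) := rfl
    rw [e, Finset.filter_eq', if_pos (Finset.mem_univ _), Finset.card_singleton]
  have h2 : #(univ.filter fun w' : Fin 2 × Fin (n / 2) × Fin 2 =>
      (gadget n).Adj (Sum.inr w) (Sum.inr w')) = 1 := by
    apply Finset.card_eq_one.mpr
    refine ⟨(w.1, w.2.1, if w.2.2 = 0 then 1 else 0), ?_⟩
    ext w'
    simp only [Finset.mem_filter, Finset.mem_univ, true_and, Finset.mem_singleton]
    have key : ∀ k k' : Fin 2, (k ≠ k') ↔ (k' = if k = 0 then 1 else 0) := by decide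
    constructor
    · rintro ⟨ha, hb, hc⟩
      exact Prod.ext_iff.mpr ⟨ha.symm, Prod.ext_iff.mpr ⟨hb.symm, (key _ _).mp hc⟩⟩
    · rintro rfl
      exact ⟨rfl, rfl, (key _ _).mpr rfl⟩
  rw [h1, h2]

lemma gadget_degreeSet (n : ℕ) (hn : 2 ≤ n) : degreeSet (gadget n) = {n, 2} := by
  ext e
  simp only [degreeSet, Finset.mem_image, Finset.mem_univ, true_and, Finset.mem_insert,
    Finset.mem_singleton]
  constructor
  · rintro ⟨(a | w), rfl⟩
    · exact Or.inl (gadget_degree_center n a)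
    · exact Or.inr (gadget_degree_sat n w)
  · rintro (rfl | rfl)
    · exact ⟨Sum.inl 0, gadget_degree_center _ 0⟩
    · exact ⟨Sum.inr (0, ⟨0, by omega⟩, 0), gadget_degree_sat _ _⟩

lemma exists_graph (A : Finset ℕ) (hA : ∀ d ∈ A, 2 ≤ d) :
    ∃ (V : Type) (_ : Fintype V) (_ : DecidableEq V) (G : SimpleGraph V)
      (_ : DecidableRel G.Adj), degreeSet G = A ∪ {2} := by
  induction A using Finset.induction_on with
  | empty =>
    refine ⟨_, inferInstance, inferInstance, gadget 2, inferInstance, ?_⟩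
    rw [gadget_degreeSet 2 le_rfl]
    simp
  | @insert a A' ha hins =>
    obtain ⟨V', iV', dV', G', iG', hG'⟩ := hins (fun d hd => hA d (Finset.mem_insert_of_mem hd))
    have ha2 : 2 ≤ a := hA a (Finset.mem_insert_self a A')
    refine ⟨_, inferInstance, inferInstance, gadget a ⊕g G', inferInstance, ?_⟩
    rw [sum_degreeSet, gadget_degreeSet a ha2, hG']
    ext x
    simp only [Finset.mem_union, Finset.mem_insert, Finset.mem_singleton]
    tauto

lemma ecard_eq {V : Type} (G : SimpleGraph V) (i : Fintype G.edgeSet) :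
    (@SimpleGraph.edgeFinset V G i).card = G.edgeSet.ncard :=
  (Set.ncard_eq_toFinset_card' _).symm

lemma transfer {V : Type} [Fintype V] [DecidableEq V] (G : SimpleGraph V)
    [inst0 : DecidableRel G.Adj] :
    ∃ (p : ℕ) (G' : SimpleGraph (Fin p)) (inst : DecidableRel G'.Adj),
      @degreeSet _ _ G' inst = degreeSet G ∧
      (@SimpleGraph.edgeFinset _ G' (@SimpleGraph.fintypeEdgeSet _ G' _ inst)).card
        = #G.edgeFinset ∧
      @mu _ _ G' inst = mu G := by
  classical
  set e := Fintype.equivFin V with he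
  set G' : SimpleGraph (Fin (Fintype.card V)) := SimpleGraph.comap (⇑e.symm) G with hG'
  letI inst : DecidableRel G'.Adj := fun a b => inst0 (e.symm a) (e.symm b)
  have hdeg : ∀ a, G'.degree a = G.degree (e.symm a) := by
    intro a
    rw [deg_filter, deg_filter]
    apply Finset.card_bij (fun b _ => e.symm b)
    · intro b hb
      simp only [Finset.mem_filter, Finset.mem_univ, true_and] at hb ⊢
      exact hb
    · intro b1 _ b2 _ h
      exact e.symm.injective h
    · intro w hw
      have hw' : G.Adj (e.symm a) w := (Finset.mem_filter.mp hw).2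
      refine ⟨e w, Finset.mem_filter.mpr ⟨Finset.mem_univ _, ?_⟩, by rw [Equiv.symm_apply_apply]⟩
      show G.Adj (e.symm a) (e.symm (e w))
      rwa [Equiv.symm_apply_apply]
  refine ⟨Fintype.card V, G', inst, ?_, ?_, ?_⟩
  · ext n
    simp only [degreeSet, Finset.mem_image, Finset.mem_univ, true_and]
    constructor
    · rintro ⟨a, rfl⟩
      exact ⟨e.symm a, (hdeg a).symm⟩
    · rintro ⟨v, rfl⟩
      exact ⟨e v, by rw [hdeg, Equiv.symm_apply_apply]⟩
  · have h1 : ∑ a, G'.degree a = ∑ v, G.degree v := by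
      apply Fintype.sum_equiv e.symm
      intro a
      exact hdeg a
    have h2 := SimpleGraph.sum_degrees_eq_twice_card_edges G'
    have h3 := SimpleGraph.sum_degrees_eq_twice_card_edges G
    omega
  · rw [mu, mu]
    apply Finset.sum_bij (fun (a : Fin (Fintype.card V)) _ => e.symm a)
    · intro a ha
      simp only [Finset.mem_filter, Finset.mem_univ, true_and] at ha ⊢
      rw [← hdeg a]
      exact ha
    · intro b1 _ b2 _ h
      exact e.symm.injective h
    · intro v hv
      have hv' : G.degree v ≠ 2 := (Finset.mem_filter.mp hv).2
      refine ⟨e v, Finset.mem_filter.mpr ⟨Finset.mem_univ _, ?_⟩, by rw [Equiv.symm_apply_apply]⟩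
      rw [hdeg, Equiv.symm_apply_apply]
      exact hv'
    · intro a _
      exact hdeg a

/-- the good shape -/
def Good (D : Finset ℕ) (m : ℕ) {p : ℕ} (G : SimpleGraph (Fin p))
    (inst : DecidableRel G.Adj) : Prop :=
  (∀ e ∈ D, e ≠ 2 → e ≠ m → @cnt _ _ G inst e = 1) ∧
  (@cnt _ _ G inst m = 1 ∨ @cnt _ _ G inst m = 2)

lemma step (D : Finset ℕ) (h2 : 2 ∈ D) (hmin : ∀ x ∈ D, 2 ≤ x) (m : ℕ) (hm : m ∈ D)
    (hmodd : Odd m) (hmleast : ∀ x ∈ D, Odd x → m ≤ x)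
    (p : ℕ) (G : SimpleGraph (Fin p)) [inst : DecidableRel G.Adj]
    (hdeg : @degreeSet _ _ G inst = D)
    (hedge : (@SimpleGraph.edgeFinset _ G (@SimpleGraph.fintypeEdgeSet _ G _ inst)).card = lq D)
    (hbad : ¬ Good D m G inst) :
    ∃ (p' : ℕ) (G' : SimpleGraph (Fin p')) (inst' : DecidableRel G'.Adj),
      @degreeSet _ _ G' inst' = D ∧
      (@SimpleGraph.edgeFinset _ G' (@SimpleGraph.fintypeEdgeSet _ G' _ inst')).card = lq D ∧
      @mu _ _ G' inst' < @mu _ _ G inst := by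
  rw [ecard_eq] at hedge
  have hwit0 : ∀ n ∈ D, ∃ u, G.degree u = n := by
    intro n hn
    rw [← hdeg] at hn
    simp only [degreeSet, Finset.mem_image, Finset.mem_univ, true_and] at hn
    exact hn
  have hcnt1 : ∀ n ∈ D, 1 ≤ cnt G n := fun n hn => cnt_pos G n (by rw [hdeg]; exact hn)
  have h2G : 2 ∈ degreeSet G := by rw [hdeg]; exact h2
  have hmG : m ∈ degreeSet G := by rw [hdeg]; exact hm
  by_cases hA : ∀ e ∈ D, e ≠ 2 → e ≠ m → cnt G e = 1
  · -- the m-count must be bad : cnt G m ≥ 3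
    have hBbad : ¬ (cnt G m = 1 ∨ cnt G m = 2) := fun hB => hbad ⟨hA, hB⟩
    push_neg at hBbad
    have hc3 : 3 ≤ cnt G m := by
      have := hcnt1 m hm
      omega
    -- extract three distinct vertices of degree m
    rw [cnt] at hc3
    obtain ⟨a, ha⟩ : (univ.filter fun v => G.degree v = m).Nonempty := by
      rw [← Finset.card_pos]
      omega
    have hc2 : 2 ≤ #((univ.filter fun v => G.degree v = m).erase a) := by
      rw [Finset.card_erase_of_mem ha]
      omega
    obtain ⟨v1, hv1, v2, hv2, hv12⟩ := Finset.one_lt_card.mp (by omega :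
      1 < #((univ.filter fun v => G.degree v = m).erase a))
    have hv1m : G.degree v1 = m := (Finset.mem_filter.mp (Finset.mem_of_mem_erase hv1)).2
    have hv2m : G.degree v2 = m := (Finset.mem_filter.mp (Finset.mem_of_mem_erase hv2)).2
    have hv1a : v1 ≠ a := Finset.ne_of_mem_erase hv1
    have hv2a : v2 ≠ a := Finset.ne_of_mem_erase hv2
    have ham : G.degree a = m := (Finset.mem_filter.mp ha).2
    obtain ⟨t, htm⟩ := hmodd
    have hm2 : 2 ≤ m := hmin m hm
    have ht1 : 1 ≤ t := by omega
    have hwit : ∀ n ∈ degreeSet G, ∃ u, u ≠ v1 ∧ u ≠ v2 ∧ G.degree u = n := by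
      intro n hn
      obtain ⟨u, hu⟩ := hwit0 n (by rw [← hdeg]; exact hn)
      by_cases h1 : u = v1
      · exact ⟨a, fun h => hv1a h.symm, fun h => hv2a h.symm, by rw [ham, ← hu, h1, hv1m]⟩
      · by_cases h2' : u = v2
        · exact ⟨a, fun h => hv1a h.symm, fun h => hv2a h.symm, by rw [ham, ← hu, h2', hv2m]⟩
        · exact ⟨u, h1, h2', hu⟩
    obtain ⟨V', iV', dV', G', iG', hds, hedge2, hmu2⟩ :=
      step_pair G v1 v2 hv12 t (by omega) (by omega) ht1 h2G hwit
    obtain ⟨p', G'', inst'', hds'', hedge'', hmu''⟩ := @transfer V' iV' dV' G' iG'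
    rw [ecard_eq, ecard_eq] at hedge''
    rw [ecard_eq, ecard_eq] at hedge2
    by_cases hadj : G.Adj v1 v2
    · -- contradiction: fewer edges than lq D
      rw [if_pos hadj] at hedge2
      exfalso
      have hmemset : G'.edgeSet.ncard ∈ {q | ∃ (p : ℕ) (G : SimpleGraph (Fin p))
          (inst : DecidableRel G.Adj), @degreeSet _ _ G inst = D ∧
          (@SimpleGraph.edgeFinset _ G (@SimpleGraph.fintypeEdgeSet _ G _ inst)).card = q} :=
        ⟨p', G'', inst'', by rw [hds'', hds, hdeg], by rw [ecard_eq]; exact hedge''⟩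
      have hle : lq D ≤ G'.edgeSet.ncard := Nat.sInf_le hmemset
      omega
    · rw [if_neg hadj] at hedge2
      refine ⟨p', G'', inst'', by rw [hds'', hds, hdeg], by rw [ecard_eq]; omega, by omega⟩
  · push_neg at hA
    obtain ⟨d, hdD, hd2, hdm, hdcnt⟩ := hA
    have hdc2 : 2 ≤ cnt G d := by
      have := hcnt1 d hdD
      omega
    rw [cnt] at hdc2
    obtain ⟨v, hv, v', hv', hvv'⟩ := Finset.one_lt_card.mp (by omega :
      1 < #(univ.filter fun u => G.degree u = d))
    have hvd : G.degree v = d := (Finset.mem_filter.mp hv).2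
    have hv'd : G.degree v' = d := (Finset.mem_filter.mp hv').2
    have hwit : ∀ n ∈ degreeSet G, ∃ u, u ≠ v ∧ G.degree u = n := by
      intro n hn
      obtain ⟨u, hu⟩ := hwit0 n (by rw [← hdeg]; exact hn)
      by_cases h1 : u = v
      · exact ⟨v', fun h => hvv' h.symm, by rw [hv'd, ← hu, h1, hvd]⟩
      · exact ⟨u, h1, hu⟩
    have hd2le : 2 ≤ d := hmin d hdD
    rcases Nat.even_or_odd d with hpar | hpar
    · -- even case : split off as 2 + 2k
      obtain ⟨k, hk⟩ : ∃ k, d = 2 + 2 * k := by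
        rcases hpar with ⟨u, hu⟩
        exact ⟨(d - 2) / 2, by omega⟩
      obtain ⟨V', iV', dV', G', iG', hds, hedge2, hmu2⟩ :=
        step_single G v 2 k (by rw [hvd]; exact hk) (by rw [hvd]; exact hd2)
          h2G h2G hwit
      obtain ⟨p', G'', inst'', hds'', hedge'', hmu''⟩ := @transfer V' iV' dV' G' iG'
      rw [ecard_eq, ecard_eq] at hedge''
      rw [ecard_eq, ecard_eq] at hedge2
      have hite : (if (2:ℕ) = 2 then (0:ℕ) else 2) = 0 := by norm_num
      rw [hite] at hmu2
      refine ⟨p', G'', inst'', by rw [hds'', hds, hdeg], by rw [ecard_eq]; omega, ?_⟩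
      rw [hmu'']
      rw [hvd] at hmu2
      omega
    · -- odd case : split off as m + 2k
      have hmd : m ≤ d := hmleast d hdD hpar
      have hmltd : m < d := lt_of_le_of_ne hmd (fun h => hdm h.symm)
      obtain ⟨k, hk⟩ : ∃ k, d = m + 2 * k := by
        have h1 := Nat.odd_iff.mp hpar
        have h2'' := Nat.odd_iff.mp hmodd
        exact ⟨(d - m) / 2, by omega⟩
      obtain ⟨V', iV', dV', G', iG', hds, hedge2, hmu2⟩ :=
        step_single G v m k (by rw [hvd]; exact hk) (by rw [hvd]; exact hd2)
          hmG h2G hwit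
      obtain ⟨p', G'', inst'', hds'', hedge'', hmu''⟩ := @transfer V' iV' dV' G' iG'
      rw [ecard_eq, ecard_eq] at hedge''
      rw [ecard_eq, ecard_eq] at hedge2
      have hmne2 : m ≠ 2 := by
        have := Nat.odd_iff.mp hmodd
        omega
      rw [if_neg hmne2] at hmu2
      refine ⟨p', G'', inst'', by rw [hds'', hds, hdeg], by rw [ecard_eq]; omega, ?_⟩
      rw [hmu'']
      rw [hvd] at hmu2
      omega

lemma master (D : Finset ℕ) (h2 : 2 ∈ D) (hmin : ∀ x ∈ D, 2 ≤ x) (m : ℕ) (hm : m ∈ D)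
    (hmodd : Odd m) (hmleast : ∀ x ∈ D, Odd x → m ≤ x) :
    ∀ (N p : ℕ) (G : SimpleGraph (Fin p)) (inst : DecidableRel G.Adj),
      @mu _ _ G inst ≤ N → @degreeSet _ _ G inst = D →
      (@SimpleGraph.edgeFinset _ G (@SimpleGraph.fintypeEdgeSet _ G _ inst)).card = lq D →
      ∃ (p' : ℕ) (G' : SimpleGraph (Fin p')) (inst' : DecidableRel G'.Adj),
        @degreeSet _ _ G' inst' = D ∧
        (@SimpleGraph.edgeFinset _ G' (@SimpleGraph.fintypeEdgeSet _ G' _ inst')).card = lq D ∧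
        Good D m G' inst' := by
  intro N
  induction N with
  | zero =>
    intro p G inst hmu hdeg hedge
    by_cases hg : Good D m G inst
    · exact ⟨p, G, inst, hdeg, hedge, hg⟩
    · obtain ⟨p', G', inst', _, _, hlt⟩ :=
        @step D h2 hmin m hm hmodd hmleast p G inst hdeg hedge hg
      omega
  | succ N ih =>
    intro p G inst hmu hdeg hedge
    by_cases hg : Good D m G inst
    · exact ⟨p, G, inst, hdeg, hedge, hg⟩
    · obtain ⟨p', G', inst', hd', he', hlt⟩ :=
        @step D h2 hmin m hm hmodd hmleast p G inst hdeg hedge hg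
      exact ih p' G' inst' (by omega) hd' he'

end OGMT

/-- For a degree set `D` with minimum `2` containing an odd element `m` (the
smallest odd element), some optimal graph has exactly one vertex of each degree
in `D` other than `2`, except possibly two vertices of degree `m`. -/
theorem optimal_graph_min_two (D : Finset ℕ) (h2 : 2 ∈ D) (hmin : ∀ x ∈ D, 2 ≤ x)
    (m : ℕ) (hm : m ∈ D) (hmodd : Odd m) (hmleast : ∀ x ∈ D, Odd x → m ≤ x) :
    ∃ (p : ℕ) (G : SimpleGraph (Fin p)) (inst : DecidableRel G.Adj),
      @degreeSet _ _ G inst = D ∧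
      (@SimpleGraph.edgeFinset _ G (@SimpleGraph.fintypeEdgeSet _ G _ inst)).card = lq D ∧
      (∀ e ∈ D, e ≠ 2 → e ≠ m →
        (Finset.univ.filter fun v => @SimpleGraph.degree _ G v
          (@SimpleGraph.neighborSetFintype _ G _ inst v) = e).card = 1) ∧
      ((Finset.univ.filter fun v => @SimpleGraph.degree _ G v
          (@SimpleGraph.neighborSetFintype _ G _ inst v) = m).card = 1 ∨
       (Finset.univ.filter fun v => @SimpleGraph.degree _ G v
          (@SimpleGraph.neighborSetFintype _ G _ inst v) = m).card = 2) := by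
  classical
  obtain ⟨V0, iV0, dV0, G0, iG0, hds0⟩ := OGMT.exists_graph D hmin
  have hds0' : @degreeSet V0 iV0 G0 iG0 = D := by
    rw [hds0]
    exact Finset.union_eq_left.mpr (Finset.singleton_subset_iff.mpr h2)
  obtain ⟨p0, G0', inst0, hds0'', hedge0, hmu0⟩ := @OGMT.transfer V0 iV0 dV0 G0 iG0
  have hne : Set.Nonempty {q | ∃ (p : ℕ) (G : SimpleGraph (Fin p))
      (inst : DecidableRel G.Adj), @degreeSet _ _ G inst = D ∧
      (@SimpleGraph.edgeFinset _ G (@SimpleGraph.fintypeEdgeSet _ G _ inst)).card = q} :=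
    ⟨_, p0, G0', inst0, by rw [hds0'', hds0'], rfl⟩
  obtain ⟨p1, G1, inst1, hdeg1, hedge1⟩ :
      ∃ (p : ℕ) (G : SimpleGraph (Fin p)) (inst : DecidableRel G.Adj),
        @degreeSet _ _ G inst = D ∧
        (@SimpleGraph.edgeFinset _ G (@SimpleGraph.fintypeEdgeSet _ G _ inst)).card = lq D :=
    Nat.sInf_mem hne
  obtain ⟨p', G', inst', hd', he', hgood⟩ :=
    OGMT.master D h2 hmin m hm hmodd hmleast (@OGMT.mu _ _ G1 inst1) p1 G1 inst1 le_rfl hdeg1 hedge1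
  exact ⟨p', G', inst', hd', he', hgood.1, hgood.2⟩
end
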